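/- arXiv:2401.09151 — 5 statements merged into one kernel-verified Lean document; each statement's English description precedes it below -/
import Mathlib

section
/- Let k be a commutative ring and H a coaugmented coalgebra over k. For every n ≥ 1 and every a ∈ H, the iterated comultiplication decomposes as Δ^{(n)}(a) = Σ_{S ⊆ {1,…,n}} (δ^{|S|}(a))_S, where for S = {m_1 < m_2 < ⋯ < m_k} ⊆ {1,…,n} the insertion map (−)_S : H^{⊗k} → H^{⊗n} is the k-linear map sending a_1 ⊗ ⋯ ⊗ a_k to the elementary tensor having a_j in the m_j-th tensor position and 1_H in all other positions. -/
open TensorProduct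

noncomputable section

universe u

variable (R : Type u) [CommRing R]

def Tpow (H : Type u) [AddCommGroup H] [Module R H] : ℕ → ModuleCat.{u} R
  | 0 => ModuleCat.of R R
  | n + 1 => ModuleCat.of R (H ⊗[R] (Tpow H n))

variable {R}
variable {H : Type u} [AddCommGroup H] [Module R H]

def iterComul (Δc : H →ₗ[R] H ⊗[R] H) (εc : H →ₗ[R] R) : (n : ℕ) → (H →ₗ[R] Tpow R H n)
  | 0 => εc
  | 1 => (TensorProduct.rid R H).symm.toLinearMap
  | n + 2 =>
      (TensorProduct.assoc R H H (Tpow R H n)).toLinearMap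
        ∘ₗ (LinearMap.rTensor (Tpow R H n) Δc)
        ∘ₗ (iterComul Δc εc (n + 1))

def mapPow (e : H →ₗ[R] H) : (n : ℕ) → (Tpow R H n →ₗ[R] Tpow R H n)
  | 0 => LinearMap.id
  | n + 1 => TensorProduct.map e (mapPow e n)

def eAug (εc : H →ₗ[R] R) (u : H) : H →ₗ[R] H :=
  LinearMap.id - (LinearMap.toSpanSingleton R H u) ∘ₗ εc

def deltaPow (Δc : H →ₗ[R] H ⊗[R] H) (εc : H →ₗ[R] R) (u : H) (n : ℕ) :
    H →ₗ[R] Tpow R H n :=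
  (mapPow (eAug εc u) n) ∘ₗ (iterComul Δc εc n)

/-- Transport along an equality of tensor power degrees. -/
def tpowCast {m n : ℕ} (h : m = n) : Tpow R H m →ₗ[R] Tpow R H n :=
  h ▸ LinearMap.id

theorem erase_zero_eq {n : ℕ} (S : Finset (Fin (n + 1))) :
    S.erase 0 = (S.preimage Fin.succ (Fin.succ_injective n).injOn).image Fin.succ := by
  ext j
  simp only [Finset.mem_image, Finset.mem_preimage, Finset.mem_erase]
  constructor
  · rintro ⟨hne, hj⟩
    exact ⟨j.pred hne, by simpa [Fin.succ_pred] using hj, Fin.succ_pred j hne⟩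
  · rintro ⟨i, hi, rfl⟩
    exact ⟨Fin.succ_ne_zero i, hi⟩

theorem card_preimage_succ {n : ℕ} (S : Finset (Fin (n + 1))) :
    (S.preimage Fin.succ (Fin.succ_injective n).injOn).card = (S.erase 0).card := by
  rw [erase_zero_eq S, Finset.card_image_of_injective _ (Fin.succ_injective n)]

/-- The insertion map `(−)_S : H^{⊗|S|} → H^{⊗n}` for a subset `S ⊆ {1,…,n}`:
it inserts the `j`-th tensor component into the position of the `j`-th element of `S`
(in increasing order) and puts `u = 1_H` in all other positions. -/
def insMap (u : H) : (n : ℕ) → (S : Finset (Fin n)) → (Tpow R H S.card →ₗ[R] Tpow R H n)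
  | 0, S => tpowCast (by simp [Finset.eq_empty_of_isEmpty S])
  | n + 1, S =>
    if h : (0 : Fin (n + 1)) ∈ S then
      (LinearMap.lTensor H
          (insMap u n (S.preimage Fin.succ (Fin.succ_injective n).injOn)))
        ∘ₗ tpowCast (m := S.card)
            (n := (S.preimage Fin.succ (Fin.succ_injective n).injOn).card + 1) (by
            have h1 := card_preimage_succ S
            have h2 := Finset.card_erase_of_mem h
            have h3 := Finset.card_pos.mpr ⟨(0 : Fin (n + 1)), h⟩
            omega)
    else
      (TensorProduct.mk R H (Tpow R H n) u)
        ∘ₗ (insMap u n (S.preimage Fin.succ (Fin.succ_injective n).injOn))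
        ∘ₗ tpowCast (m := S.card)
            (n := (S.preimage Fin.succ (Fin.succ_injective n).injOn).card) (by
            have h1 := card_preimage_succ S
            rw [Finset.erase_eq_of_notMem h] at h1
            omega)


section Aux

variable {R : Type u} [CommRing R] {H : Type u} [AddCommGroup H] [Module R H]

theorem tpowCast_comp_deltaPow (Δc : H →ₗ[R] H ⊗[R] H) (εc : H →ₗ[R] R) (u : H)
    {m n : ℕ} (h : m = n) :
    (tpowCast h) ∘ₗ deltaPow Δc εc u m = deltaPow Δc εc u n := by
  subst h; rfl

/-- Select `e` at positions in `S` and `η∘ε` elsewhere. -/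
def selPow (εc : H →ₗ[R] R) (u : H) : (n : ℕ) → Finset (Fin n) → (Tpow R H n →ₗ[R] Tpow R H n)
  | 0, _ => LinearMap.id
  | n + 1, S =>
      TensorProduct.map
        (if (0 : Fin (n + 1)) ∈ S then eAug εc u
         else (LinearMap.toSpanSingleton R H u) ∘ₗ εc)
        (selPow εc u n (S.preimage Fin.succ (Fin.succ_injective n).injOn))

variable [Coalgebra R H]

theorem iterComul_succ (n : ℕ) :
    iterComul (Coalgebra.comul (R := R) (A := H)) Coalgebra.counit (n + 1)
      = (LinearMap.lTensor H (iterComul Coalgebra.comul Coalgebra.counit n))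
          ∘ₗ Coalgebra.comul := by
  induction n with
  | zero =>
      show (TensorProduct.rid R H).symm.toLinearMap
        = (LinearMap.lTensor H (Coalgebra.counit (R := R) (A := H))) ∘ₗ Coalgebra.comul
      rw [Coalgebra.lTensor_counit_comp_comul]
      ext a
      rfl
  | succ m ih =>
      show (TensorProduct.assoc R H H (Tpow R H m)).toLinearMap
            ∘ₗ (LinearMap.rTensor (Tpow R H m) Coalgebra.comul)
            ∘ₗ (iterComul Coalgebra.comul Coalgebra.counit (m + 1))
          = _
      rw [ih]
      set g := iterComul (Coalgebra.comul (R := R) (A := H)) Coalgebra.counit m with hg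
      ext a
      have step : ∀ x : H ⊗[R] H,
          (TensorProduct.assoc R H H (Tpow R H m))
            (LinearMap.rTensor (Tpow R H m) Coalgebra.comul (LinearMap.lTensor H g x))
          = LinearMap.lTensor H (LinearMap.lTensor H g)
              ((TensorProduct.assoc R H H H)
                (LinearMap.rTensor H Coalgebra.comul x)) := by
        intro x
        induction x with
        | zero => simp
        | tmul b c =>
            simp only [LinearMap.lTensor_tmul, LinearMap.rTensor_tmul]
            generalize Coalgebra.comul (R := R) (A := H) b = y
            induction y with
            | zero => simp
            | tmul p q => simp
            | add y z hy hz =>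
                simp only [TensorProduct.add_tmul, map_add, hy, hz]
        | add y z hy hz => simp only [map_add, hy, hz]
      simp only [LinearMap.comp_apply, LinearEquiv.coe_coe]
      rw [step, Coalgebra.coassoc_apply]
      show _ = LinearMap.lTensor H (LinearMap.lTensor H g ∘ₗ Coalgebra.comul) (Coalgebra.comul a)
      rw [LinearMap.lTensor_comp]
      rfl

theorem deltaPow_succ (u : H) (m : ℕ) :
    deltaPow (Coalgebra.comul (R := R) (A := H)) Coalgebra.counit u (m + 1)
      = (TensorProduct.map (eAug Coalgebra.counit u)
          (deltaPow Coalgebra.comul Coalgebra.counit u m)) ∘ₗ Coalgebra.comul := by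
  show (TensorProduct.map (eAug Coalgebra.counit u) (mapPow (eAug Coalgebra.counit u) m))
        ∘ₗ iterComul Coalgebra.comul Coalgebra.counit (m + 1) = _
  rw [iterComul_succ, ← LinearMap.comp_assoc, LinearMap.map_comp_lTensor]
  rfl

theorem map_unit_counit_comp_comul (u : H) {T : Type u} [AddCommGroup T] [Module R T]
    (g : H →ₗ[R] T) :
    (TensorProduct.map ((LinearMap.toSpanSingleton R H u) ∘ₗ Coalgebra.counit) g)
        ∘ₗ Coalgebra.comul
      = (TensorProduct.mk R H T u) ∘ₗ g := by
  have h1 : TensorProduct.map ((LinearMap.toSpanSingleton R H u)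
        ∘ₗ (Coalgebra.counit (R := R) (A := H))) g
      = (TensorProduct.map (LinearMap.toSpanSingleton R H u) g)
          ∘ₗ LinearMap.rTensor H (Coalgebra.counit (R := R) (A := H)) := by
    rw [LinearMap.map_comp_rTensor]
  rw [h1, LinearMap.comp_assoc, Coalgebra.rTensor_counit_comp_comul]
  ext a
  simp

theorem selPow_comp_iterComul (u : H) (n : ℕ) (S : Finset (Fin n)) :
    selPow (Coalgebra.counit (R := R) (A := H)) u n S
        ∘ₗ iterComul Coalgebra.comul Coalgebra.counit n
      = insMap u n S ∘ₗ deltaPow Coalgebra.comul Coalgebra.counit u S.card := by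
  induction n with
  | zero =>
      show LinearMap.id ∘ₗ (Coalgebra.counit (R := R) (A := H)) = _
      rw [show insMap u 0 S = tpowCast (by simp [Finset.eq_empty_of_isEmpty S]) from rfl,
        tpowCast_comp_deltaPow]
      rfl
  | succ m ih =>
      show (TensorProduct.map
          (if (0 : Fin (m + 1)) ∈ S then eAug Coalgebra.counit u
           else (LinearMap.toSpanSingleton R H u) ∘ₗ Coalgebra.counit)
          (selPow Coalgebra.counit u m (S.preimage Fin.succ (Fin.succ_injective m).injOn)))
            ∘ₗ iterComul Coalgebra.comul Coalgebra.counit (m + 1) = _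
      rw [iterComul_succ, ← LinearMap.comp_assoc, LinearMap.map_comp_lTensor, ih]
      simp only [insMap]
      by_cases h0 : (0 : Fin (m + 1)) ∈ S
      · rw [if_pos h0, dif_pos h0]
        show _ = LinearMap.lTensor H (insMap u m (S.preimage Fin.succ (Fin.succ_injective m).injOn))
            ∘ₗ ((tpowCast (n := (S.preimage Fin.succ (Fin.succ_injective m).injOn).card + 1) _
              ∘ₗ deltaPow Coalgebra.comul Coalgebra.counit u S.card :
                H →ₗ[R] Tpow R H ((S.preimage Fin.succ (Fin.succ_injective m).injOn).card + 1)))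
        conv_rhs => arg 2; rw [tpowCast_comp_deltaPow, deltaPow_succ]
        show _ = LinearMap.lTensor H (insMap u m (S.preimage Fin.succ (Fin.succ_injective m).injOn))
            ∘ₗ (TensorProduct.map (eAug Coalgebra.counit u)
              (deltaPow Coalgebra.comul Coalgebra.counit u (S.preimage Fin.succ (Fin.succ_injective m).injOn).card) ∘ₗ Coalgebra.comul)
        rw [← LinearMap.comp_assoc, LinearMap.lTensor_comp_map]
      · rw [if_neg h0, dif_neg h0]
        show _ = TensorProduct.mk R H (Tpow R H m) u ∘ₗ (insMap u m (S.preimage Fin.succ (Fin.succ_injective m).injOn)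
            ∘ₗ (tpowCast (n := (S.preimage Fin.succ (Fin.succ_injective m).injOn).card) _
              ∘ₗ deltaPow Coalgebra.comul Coalgebra.counit u S.card))
        rw [tpowCast_comp_deltaPow, ← map_unit_counit_comp_comul u]

def finsetSuccEquiv (n : ℕ) : Finset (Fin (n + 1)) ≃ Bool × Finset (Fin n) where
  toFun S := (decide ((0 : Fin (n + 1)) ∈ S),
    S.preimage Fin.succ (Fin.succ_injective n).injOn)
  invFun p := (if p.1 then {0} else ∅) ∪ p.2.image Fin.succ
  left_inv S := by
    ext j
    rcases Fin.eq_zero_or_eq_succ j with rfl | ⟨i, rfl⟩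
    · by_cases h : (0 : Fin (n + 1)) ∈ S <;> simp [h, Fin.succ_ne_zero]
    · by_cases h : (0 : Fin (n + 1)) ∈ S <;>
        simp [h, Fin.succ_ne_zero, (Fin.succ_injective n).eq_iff,
          fun i => (Fin.succ_ne_zero i).symm]
  right_inv p := by
    rcases p with ⟨b, T⟩
    refine Prod.ext ?_ ?_
    · cases b <;> simp [Fin.succ_ne_zero, fun i => (Fin.succ_ne_zero i).symm]
    · ext i
      cases b <;> simp [Fin.succ_ne_zero, (Fin.succ_injective n).eq_iff]

theorem sum_selPow (εc : H →ₗ[R] R) (u : H) (n : ℕ) :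
    ∑ S : Finset (Fin n), selPow εc u n S
      = (LinearMap.id : Tpow R H n →ₗ[R] Tpow R H n) := by
  induction n with
  | zero =>
      rw [show (Finset.univ : Finset (Finset (Fin 0))) = {∅} from rfl]
      simp [selPow]
  | succ m ih =>
      show Finset.sum (M := H ⊗[R] Tpow R H m →ₗ[R] H ⊗[R] Tpow R H m) Finset.univ
        (fun S => selPow εc u (m + 1) S) = LinearMap.id
      rw [Fintype.sum_equiv (M := H ⊗[R] Tpow R H m →ₗ[R] H ⊗[R] Tpow R H m) (finsetSuccEquiv m)
        (fun S => selPow εc u (m + 1) S) (fun p => TensorProduct.map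
            (if p.1 then eAug εc u else (LinearMap.toSpanSingleton R H u) ∘ₗ εc)
            (selPow εc u m p.2))
        (fun S => by
          show TensorProduct.map _ _ = _
          simp only [finsetSuccEquiv, Equiv.coe_fn_mk]
          congr 1
          by_cases h : (0 : Fin (m + 1)) ∈ S <;> simp [h])]
      rw [Fintype.sum_prod_type]
      have key : ∀ f : H →ₗ[R] H,
          ∑ T : Finset (Fin m), TensorProduct.map f (selPow εc u m T)
            = TensorProduct.map f LinearMap.id := by
        intro f
        rw [← ih]
        simp only [← TensorProduct.mapBilinear_apply (R := R)]
        rw [← map_sum]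
      rw [Fintype.sum_bool]
      simp only [show (true = true) = True from by simp, show (false = true) = False from by simp,
        if_true, if_false]
      simp only [key]
      rw [← TensorProduct.map_add_left]
      have : eAug εc u + (LinearMap.toSpanSingleton R H u) ∘ₗ εc = LinearMap.id := by
        unfold eAug; abel
      rw [this]
      exact TensorProduct.map_id

end Aux

theorem stmt1 {R : Type u} [CommRing R] {H : Type u} [AddCommGroup H] [Module R H]
    [Coalgebra R H] (u : H)
    (hεu : Coalgebra.counit (R := R) (A := H) u = 1)
    (hΔu : Coalgebra.comul (R := R) (A := H) u = u ⊗ₜ[R] u)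
    (n : ℕ) (hn : 1 ≤ n) (a : H) :
    iterComul (Coalgebra.comul (R := R) (A := H)) (Coalgebra.counit (R := R) (A := H)) n a
      = ∑ S : Finset (Fin n),
          insMap u n S
            (deltaPow (Coalgebra.comul (R := R) (A := H))
              (Coalgebra.counit (R := R) (A := H)) u S.card a) := by
  have h := LinearMap.congr_fun (sum_selPow (Coalgebra.counit (R := R) (A := H)) u n)
    (iterComul (Coalgebra.comul (R := R) (A := H)) Coalgebra.counit n a)
  simp only [LinearMap.coe_sum, Finset.sum_apply, LinearMap.id_coe, id_eq] at h
  conv_lhs => rw [← h]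
  refine Finset.sum_congr rfl fun S _ => ?_
  have := LinearMap.congr_fun (selPow_comp_iterComul (R := R) (H := H) u n S) a
  simpa using this
end
end

section
/- Let k be a commutative ring and let H_1, H_2 be coaugmented coalgebras over k. Equip H_1 ⊗ H_2 with the tensor product coalgebra structure and the coaugmentation η(1) = 1_{H_1} ⊗ 1_{H_2}. If a ∈ P_n(H_1) and b ∈ P_m(H_2), then a ⊗ b ∈ P_{n+m}(H_1 ⊗ H_2). -/
open TensorProduct

noncomputable section

universe u

variable (R : Type u) [CommRing R]

variable {R}
variable {H : Type u} [AddCommGroup H] [Module R H]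

/-- The `n`-th term `P_n(H) := ker (δ^{n+1})` of the coradical filtration. -/
def corad (Δc : H →ₗ[R] H ⊗[R] H) (εc : H →ₗ[R] R) (u : H) (n : ℕ) : Submodule R H :=
  LinearMap.ker (deltaPow Δc εc u (n + 1))

section TensorCoalgebra

variable {R : Type u} [CommRing R]
variable {H₁ H₂ : Type u} [AddCommGroup H₁] [Module R H₁] [AddCommGroup H₂] [Module R H₂]

/-- The comultiplication `(id ⊗ swap ⊗ id) ∘ (Δ₁ ⊗ Δ₂)` of the tensor product coalgebra. -/
def tensorComul (Δ₁ : H₁ →ₗ[R] H₁ ⊗[R] H₁) (Δ₂ : H₂ →ₗ[R] H₂ ⊗[R] H₂) :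
    (H₁ ⊗[R] H₂) →ₗ[R] (H₁ ⊗[R] H₂) ⊗[R] (H₁ ⊗[R] H₂) :=
  (TensorProduct.tensorTensorTensorComm R H₁ H₁ H₂ H₂).toLinearMap
    ∘ₗ TensorProduct.map Δ₁ Δ₂

/-- The counit `ε₁ ⊗ ε₂` of the tensor product coalgebra. -/
def tensorCounit (ε₁ : H₁ →ₗ[R] R) (ε₂ : H₂ →ₗ[R] R) : (H₁ ⊗[R] H₂) →ₗ[R] R :=
  (TensorProduct.lid R R).toLinearMap ∘ₗ TensorProduct.map ε₁ ε₂

end TensorCoalgebra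


/-! ### Auxiliary development -/

section OneCoalgebraAux

/-- `p = η ∘ ε`. -/
def pAug (εc : H →ₗ[R] R) (u : H) : H →ₗ[R] H :=
  (LinearMap.toSpanSingleton R H u) ∘ₗ εc

/-- Select the operator `e_H` (for `false`) or `η ∘ ε` (for `true`). -/
def opOf (εc : H →ₗ[R] R) (u : H) : Bool → (H →ₗ[R] H)
  | false => eAug εc u
  | true => pAug εc u

/-- Apply a string of operators (selected by `f`) across the tensor power. -/
def mapIdx (εc : H →ₗ[R] R) (u : H) : (N : ℕ) → (Fin N → Bool) → (Tpow R H N →ₗ[R] Tpow R H N)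
  | 0, _ => LinearMap.id
  | N + 1, f => TensorProduct.map (opOf εc u (f 0)) (mapIdx εc u N (f ∘ Fin.succ))

/-- Number of `e`-positions (`false` values) of a string. -/
def cntE : (N : ℕ) → (Fin N → Bool) → ℕ
  | 0, _ => 0
  | N + 1, f => cntE N (f ∘ Fin.succ) + (if f 0 = false then 1 else 0)

theorem assoc_lTensor_nat {A B C C' : Type u} [AddCommGroup A] [Module R A]
    [AddCommGroup B] [Module R B] [AddCommGroup C] [Module R C]
    [AddCommGroup C'] [Module R C'] (f : C →ₗ[R] C') :
    (TensorProduct.assoc R A B C').toLinearMap ∘ₗ (f.lTensor (A ⊗[R] B))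
      = ((f.lTensor B).lTensor A) ∘ₗ (TensorProduct.assoc R A B C).toLinearMap := by
  apply TensorProduct.ext_threefold
  intro x y z
  simp

variable (Δc : H →ₗ[R] H ⊗[R] H) (εc : H →ₗ[R] R) (u : H)

theorem iterComul_tail
    (hco : TensorProduct.assoc R H H H ∘ₗ Δc.rTensor H ∘ₗ Δc = Δc.lTensor H ∘ₗ Δc)
    (hlt : εc.lTensor H ∘ₗ Δc = (TensorProduct.mk R H R).flip 1) :
    ∀ N, iterComul Δc εc (N + 1) = (iterComul Δc εc N).lTensor H ∘ₗ Δc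
  | 0 => by
      apply LinearMap.ext; intro x
      have h := LinearMap.congr_fun hlt x
      show ((TensorProduct.rid R H).symm x : H ⊗[R] R) = LinearMap.lTensor H εc (Δc x)
      simp only [LinearMap.comp_apply, TensorProduct.mk_apply, LinearMap.flip_apply] at h
      rw [h, TensorProduct.rid_symm_apply]
  | N + 1 => by
      have ih := iterComul_tail hco hlt N
      show (TensorProduct.assoc R H H (Tpow R H N)).toLinearMap
          ∘ₗ (LinearMap.rTensor (Tpow R H N) Δc) ∘ₗ iterComul Δc εc (N + 1)
        = (iterComul Δc εc (N + 1)).lTensor H ∘ₗ Δc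
      conv_lhs => rw [ih]
      conv_rhs => rw [ih]
      refine Eq.trans ?_ (congrArg (fun F => F ∘ₗ Δc) (LinearMap.lTensor_comp (M := H) (g := (iterComul Δc εc N).lTensor H) (f := Δc))).symm
      -- reassociate and use coassociativity
      have h1 : (Δc.rTensor (Tpow R H N)) ∘ₗ ((iterComul Δc εc N).lTensor H)
          = TensorProduct.map Δc (iterComul Δc εc N) := by simp
      have h2 : TensorProduct.map Δc (iterComul Δc εc N)
          = ((iterComul Δc εc N).lTensor (H ⊗[R] H)) ∘ₗ (Δc.rTensor H) := by simp
      have h3 := assoc_lTensor_nat (A := H) (B := H) (iterComul Δc εc N)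
      calc (TensorProduct.assoc R H H (Tpow R H N)).toLinearMap
            ∘ₗ (LinearMap.rTensor (Tpow R H N) Δc) ∘ₗ ((iterComul Δc εc N).lTensor H ∘ₗ Δc)
          = ((TensorProduct.assoc R H H (Tpow R H N)).toLinearMap
              ∘ₗ ((Δc.rTensor (Tpow R H N)) ∘ₗ ((iterComul Δc εc N).lTensor H))) ∘ₗ Δc := by
            simp only [LinearMap.comp_assoc]
        _ = ((TensorProduct.assoc R H H (Tpow R H N)).toLinearMap
              ∘ₗ ((iterComul Δc εc N).lTensor (H ⊗[R] H))) ∘ₗ (Δc.rTensor H) ∘ₗ Δc := by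
            rw [h1, h2]; simp only [LinearMap.comp_assoc]
        _ = (((iterComul Δc εc N).lTensor H).lTensor H)
              ∘ₗ ((TensorProduct.assoc R H H H).toLinearMap ∘ₗ (Δc.rTensor H) ∘ₗ Δc) := by
            rw [h3]; simp only [LinearMap.comp_assoc]
        _ = (((iterComul Δc εc N).lTensor H).lTensor H) ∘ₗ (Δc.lTensor H) ∘ₗ Δc := by
            rw [← hco]
        _ = (((iterComul Δc εc N).lTensor H).lTensor H ∘ₗ Δc.lTensor H) ∘ₗ Δc := by
            simp only [LinearMap.comp_assoc]

theorem deltaPow_tail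
    (hco : TensorProduct.assoc R H H H ∘ₗ Δc.rTensor H ∘ₗ Δc = Δc.lTensor H ∘ₗ Δc)
    (hlt : εc.lTensor H ∘ₗ Δc = (TensorProduct.mk R H R).flip 1) (N : ℕ) :
    deltaPow Δc εc u (N + 1)
      = TensorProduct.map (eAug εc u) (deltaPow Δc εc u N) ∘ₗ Δc := by
  show TensorProduct.map (eAug εc u) (mapPow (eAug εc u) N) ∘ₗ iterComul Δc εc (N + 1) = _
  rw [iterComul_tail Δc εc hco hlt N]
  have : (iterComul Δc εc N).lTensor H
      = TensorProduct.map LinearMap.id (iterComul Δc εc N) := rfl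
  rw [this, ← LinearMap.comp_assoc, ← TensorProduct.map_comp]
  rfl

/-- `(e ⊗ e) ∘ Δ ∘ e = (e ⊗ e) ∘ Δ` for a grouplike `u`. -/
theorem ee_comul_eAug (hεu : εc u = 1) (hΔu : Δc u = u ⊗ₜ[R] u) :
    TensorProduct.map (eAug εc u) (eAug εc u) ∘ₗ Δc ∘ₗ (eAug εc u)
      = TensorProduct.map (eAug εc u) (eAug εc u) ∘ₗ Δc := by
  apply LinearMap.ext; intro x
  have heu : eAug εc u u = 0 := by
    simp [eAug, LinearMap.toSpanSingleton_apply, hεu]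
  simp only [LinearMap.comp_apply, eAug, LinearMap.sub_apply, LinearMap.id_apply,
    LinearMap.comp_apply, map_sub, LinearMap.toSpanSingleton_apply, map_smul, hΔu]
  have : TensorProduct.map (eAug εc u) (eAug εc u) (u ⊗ₜ[R] u) = 0 := by
    rw [TensorProduct.map_tmul, heu, TensorProduct.zero_tmul]
  simp only [eAug] at this
  rw [this, smul_zero, sub_zero]

theorem deltaPow_succ_succ (hεu : εc u = 1) (hΔu : Δc u = u ⊗ₜ[R] u) (j : ℕ) :
    deltaPow Δc εc u (j + 2)
      = (TensorProduct.assoc R H H (Tpow R H j)).toLinearMap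
          ∘ₗ (TensorProduct.map (TensorProduct.map (eAug εc u) (eAug εc u) ∘ₗ Δc)
                (LinearMap.id (R := R) (M := Tpow R H j)))
          ∘ₗ deltaPow Δc εc u (j + 1) := by
  show TensorProduct.map (eAug εc u) (TensorProduct.map (eAug εc u) (mapPow (eAug εc u) j))
      ∘ₗ ((TensorProduct.assoc R H H (Tpow R H j)).toLinearMap
          ∘ₗ (LinearMap.rTensor (Tpow R H j) Δc) ∘ₗ iterComul Δc εc (j + 1)) = _
  have hnat := TensorProduct.map_map_comp_assoc_eq (eAug εc u) (eAug εc u) (mapPow (eAug εc u) j)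
  calc TensorProduct.map (eAug εc u) (TensorProduct.map (eAug εc u) (mapPow (eAug εc u) j))
        ∘ₗ ((TensorProduct.assoc R H H (Tpow R H j)).toLinearMap
          ∘ₗ (LinearMap.rTensor (Tpow R H j) Δc) ∘ₗ iterComul Δc εc (j + 1))
      = (TensorProduct.map (eAug εc u) (TensorProduct.map (eAug εc u) (mapPow (eAug εc u) j))
          ∘ₗ (TensorProduct.assoc R H H (Tpow R H j)).toLinearMap)
          ∘ₗ (LinearMap.rTensor (Tpow R H j) Δc) ∘ₗ iterComul Δc εc (j + 1) := by
        simp only [LinearMap.comp_assoc]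
    _ = ((TensorProduct.assoc R H H (Tpow R H j)).toLinearMap
          ∘ₗ TensorProduct.map (TensorProduct.map (eAug εc u) (eAug εc u)) (mapPow (eAug εc u) j))
          ∘ₗ (LinearMap.rTensor (Tpow R H j) Δc) ∘ₗ iterComul Δc εc (j + 1) := by rw [hnat]
    _ = (TensorProduct.assoc R H H (Tpow R H j)).toLinearMap
          ∘ₗ (TensorProduct.map (TensorProduct.map (eAug εc u) (eAug εc u)) (mapPow (eAug εc u) j)
              ∘ₗ (LinearMap.rTensor (Tpow R H j) Δc)) ∘ₗ iterComul Δc εc (j + 1) := by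
        rfl
    _ = (TensorProduct.assoc R H H (Tpow R H j)).toLinearMap
          ∘ₗ (TensorProduct.map ((TensorProduct.map (eAug εc u) (eAug εc u)) ∘ₗ Δc)
              (mapPow (eAug εc u) j)) ∘ₗ iterComul Δc εc (j + 1) := by
        rw [LinearMap.map_comp_rTensor]
    _ = (TensorProduct.assoc R H H (Tpow R H j)).toLinearMap
          ∘ₗ (TensorProduct.map ((TensorProduct.map (eAug εc u) (eAug εc u)) ∘ₗ Δc ∘ₗ (eAug εc u))
              (mapPow (eAug εc u) j)) ∘ₗ iterComul Δc εc (j + 1) := by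
        conv_lhs => rw [← ee_comul_eAug Δc εc u hεu hΔu]
    _ = (TensorProduct.assoc R H H (Tpow R H j)).toLinearMap
          ∘ₗ (TensorProduct.map (TensorProduct.map (eAug εc u) (eAug εc u) ∘ₗ Δc)
                (LinearMap.id (R := R) (M := Tpow R H j)))
          ∘ₗ (TensorProduct.map (eAug εc u) (mapPow (eAug εc u) j)) ∘ₗ iterComul Δc εc (j + 1) := by
        have : ((TensorProduct.map (eAug εc u) (eAug εc u)) ∘ₗ Δc ∘ₗ (eAug εc u)) =
            ((TensorProduct.map (eAug εc u) (eAug εc u)) ∘ₗ Δc) ∘ₗ (eAug εc u) := by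
          simp only [LinearMap.comp_assoc]
        rw [this]
        have hsplit : TensorProduct.map
              (((TensorProduct.map (eAug εc u) (eAug εc u)) ∘ₗ Δc) ∘ₗ (eAug εc u))
              (mapPow (eAug εc u) j)
            = (TensorProduct.map (TensorProduct.map (eAug εc u) (eAug εc u) ∘ₗ Δc)
                (LinearMap.id (R := R) (M := Tpow R H j)))
              ∘ₗ (TensorProduct.map (eAug εc u) (mapPow (eAug εc u) j)) := by
          have h4 := TensorProduct.map_comp
            ((TensorProduct.map (eAug εc u) (eAug εc u)) ∘ₗ Δc)
            (LinearMap.id (R := R) (M := Tpow R H j)) (eAug εc u) (mapPow (eAug εc u) j)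
          rw [LinearMap.id_comp] at h4
          exact h4
        rw [hsplit]
        rfl
    _ = _ := rfl

theorem deltaPow_eq_zero_of_le (hεu : εc u = 1) (hΔu : Δc u = u ⊗ₜ[R] u)
    {a : H} {n : ℕ} (h : deltaPow Δc εc u (n + 1) a = 0) :
    ∀ j, deltaPow Δc εc u (n + 1 + j) a = 0
  | 0 => h
  | j + 1 => by
      have ih := deltaPow_eq_zero_of_le hεu hΔu h j
      have : n + 1 + (j + 1) = (n + j) + 2 := by omega
      rw [this]
      rw [deltaPow_succ_succ Δc εc u hεu hΔu (n + j)]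
      have h2 : deltaPow Δc εc u (n + j + 1) a = 0 := by
        have e : n + 1 + j = n + j + 1 := by omega
        rw [← e]; exact ih
      show (TensorProduct.assoc R H H (Tpow R H (n + j))).toLinearMap
            (TensorProduct.map (TensorProduct.map (eAug εc u) (eAug εc u) ∘ₗ Δc)
              (LinearMap.id (R := R) (M := Tpow R H (n + j)))
              (deltaPow Δc εc u (n + j + 1) a)) = 0
      rw [h2]; erw [map_zero]

theorem pAug_strip {X : Type u} [AddCommGroup X] [Module R X] (M : H →ₗ[R] X)
    (hrt : εc.rTensor H ∘ₗ Δc = TensorProduct.mk R R H 1) :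
    TensorProduct.map (pAug εc u) M ∘ₗ Δc = TensorProduct.mk R H X u ∘ₗ M := by
  have h1 : TensorProduct.map (pAug εc u) M
      = TensorProduct.map (LinearMap.toSpanSingleton R H u) M ∘ₗ (εc.rTensor H) := by
    have := TensorProduct.map_comp (LinearMap.toSpanSingleton R H u) M εc
      (LinearMap.id (R := R) (M := H))
    simp only [LinearMap.comp_id] at this
    rw [pAug, this]; rfl
  rw [h1, LinearMap.comp_assoc, hrt]
  apply LinearMap.ext; intro x
  simp [LinearMap.toSpanSingleton_apply]

theorem mapIdx_strip
    (hco : TensorProduct.assoc R H H H ∘ₗ Δc.rTensor H ∘ₗ Δc = Δc.lTensor H ∘ₗ Δc)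
    (hrt : εc.rTensor H ∘ₗ Δc = TensorProduct.mk R R H 1)
    (hlt : εc.lTensor H ∘ₗ Δc = (TensorProduct.mk R H R).flip 1) :
    ∀ (N : ℕ) (f : Fin N → Bool),
      ∃ J : (Tpow R H (cntE N f) →ₗ[R] Tpow R H N),
        (mapIdx εc u N f) ∘ₗ iterComul Δc εc N = J ∘ₗ deltaPow Δc εc u (cntE N f)
  | 0, f => ⟨LinearMap.id, by rfl⟩
  | N + 1, f => by
      obtain ⟨J', hJ'⟩ := mapIdx_strip hco hrt hlt N (f ∘ Fin.succ)
      have hstep : (mapIdx εc u (N + 1) f) ∘ₗ iterComul Δc εc (N + 1)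
          = TensorProduct.map LinearMap.id J'
              ∘ₗ (TensorProduct.map (opOf εc u (f 0)) (deltaPow Δc εc u (cntE N (f ∘ Fin.succ))))
              ∘ₗ Δc := by
        show TensorProduct.map (opOf εc u (f 0)) (mapIdx εc u N (f ∘ Fin.succ))
            ∘ₗ iterComul Δc εc (N + 1) = _
        rw [iterComul_tail Δc εc hco hlt N]
        have hlt2 : (iterComul Δc εc N).lTensor H
            = TensorProduct.map LinearMap.id (iterComul Δc εc N) := rfl
        rw [hlt2, ← LinearMap.comp_assoc, ← TensorProduct.map_comp, hJ']
        simp only [LinearMap.comp_id]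
        have hsp : TensorProduct.map (opOf εc u (f 0)) (J' ∘ₗ deltaPow Δc εc u (cntE N (f ∘ Fin.succ)))
            = TensorProduct.map LinearMap.id J'
              ∘ₗ TensorProduct.map (opOf εc u (f 0)) (deltaPow Δc εc u (cntE N (f ∘ Fin.succ))) := by
          rw [← TensorProduct.map_comp]
          simp only [LinearMap.id_comp, LinearMap.comp_id]
        rw [hsp, LinearMap.comp_assoc]
      cases hf : f 0 with
      | false =>
          have hc : cntE (N + 1) f = cntE N (f ∘ Fin.succ) + 1 := by
            simp [cntE, hf]
          rw [hc]
          refine ⟨TensorProduct.map LinearMap.id J', ?_⟩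
          rw [hstep, hf, deltaPow_tail Δc εc u hco hlt (cntE N (f ∘ Fin.succ))]
          simp only [opOf]
          rfl
      | true =>
          have hc : cntE (N + 1) f = cntE N (f ∘ Fin.succ) := by
            simp [cntE, hf]
          rw [hc]
          refine ⟨TensorProduct.map LinearMap.id J'
            ∘ₗ TensorProduct.mk R H (Tpow R H (cntE N (f ∘ Fin.succ))) u, ?_⟩
          rw [hstep, hf]
          simp only [opOf]
          rw [pAug_strip Δc εc u (deltaPow Δc εc u (cntE N (f ∘ Fin.succ))) hrt]
          rfl

theorem mapIdx_iterComul_eq_zero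
    (hco : TensorProduct.assoc R H H H ∘ₗ Δc.rTensor H ∘ₗ Δc = Δc.lTensor H ∘ₗ Δc)
    (hrt : εc.rTensor H ∘ₗ Δc = TensorProduct.mk R R H 1)
    (hlt : εc.lTensor H ∘ₗ Δc = (TensorProduct.mk R H R).flip 1)
    (hεu : εc u = 1) (hΔu : Δc u = u ⊗ₜ[R] u)
    {a : H} {n : ℕ} (h : deltaPow Δc εc u (n + 1) a = 0)
    (N : ℕ) (f : Fin N → Bool) (hf : n + 1 ≤ cntE N f) :
    mapIdx εc u N f (iterComul Δc εc N a) = 0 := by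
  obtain ⟨J, hJ⟩ := mapIdx_strip Δc εc u hco hrt hlt N f
  have h0 : deltaPow Δc εc u (cntE N f) a = 0 := by
    obtain ⟨j, hj⟩ := Nat.exists_eq_add_of_le hf
    rw [hj]
    exact deltaPow_eq_zero_of_le Δc εc u hεu hΔu h j
  have := LinearMap.congr_fun hJ a
  simp only [LinearMap.comp_apply] at this
  rw [this, h0, map_zero]

theorem cons_comp_succ {α : Type u} (N : ℕ) (c : α) (f : Fin N → α) :
    ((Fin.cons c f : Fin (N + 1) → α) ∘ Fin.succ) = f :=
  funext fun i => by simp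

theorem mapIdx_cons (εc : H →ₗ[R] R) (u : H) (N : ℕ) (c : Bool) (f : Fin N → Bool) :
    mapIdx εc u (N + 1) (Fin.cons c f)
      = TensorProduct.map (opOf εc u c) (mapIdx εc u N f) := by
  rw [show mapIdx εc u (N + 1) (Fin.cons c f)
      = TensorProduct.map (opOf εc u ((Fin.cons c f : Fin (N + 1) → Bool) 0))
          (mapIdx εc u N ((Fin.cons c f : Fin (N + 1) → Bool) ∘ Fin.succ)) from rfl,
    cons_comp_succ, Fin.cons_zero]

theorem cntE_cons (N : ℕ) (c : Bool) (f : Fin N → Bool) :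
    cntE (N + 1) (Fin.cons c f) = cntE N f + (if c = false then 1 else 0) := by
  rw [show cntE (N + 1) (Fin.cons c f)
      = cntE N ((Fin.cons c f : Fin (N + 1) → Bool) ∘ Fin.succ)
        + (if (Fin.cons c f : Fin (N + 1) → Bool) 0 = false then 1 else 0) from rfl,
    cons_comp_succ, Fin.cons_zero]

theorem decide_cons (N : ℕ) (k : Fin 3) (g : Fin N → Fin 3) (v : Fin 3) :
    (fun i => decide ((Fin.cons k g : Fin (N + 1) → Fin 3) i = v))
      = (Fin.cons (decide (k = v)) (fun i => decide (g i = v)) : Fin (N + 1) → Bool) := by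
  funext i
  refine Fin.cases ?_ ?_ i
  · simp
  · intro j; simp

theorem cntE_bound : ∀ (N : ℕ) (g : Fin N → Fin 3),
    N ≤ cntE N (fun i => decide (g i = 1)) + cntE N (fun i => decide (g i = 2))
  | 0, _ => Nat.le_refl 0
  | N + 1, g => by
      have ih := cntE_bound N (fun i => g i.succ)
      have hg : g = Fin.cons (g 0) (fun i => g i.succ) := by
        funext i
        refine Fin.cases ?_ ?_ i
        · simp
        · intro j; simp
      conv_rhs => rw [hg]
      rw [decide_cons, decide_cons, cntE_cons, cntE_cons]
      by_cases h1 : g 0 = 1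
      · rw [if_neg (by rw [h1]; decide), if_pos (by rw [h1]; decide)]
        omega
      · by_cases h2 : g 0 = 2
        · rw [if_pos (decide_eq_false h1), if_neg (by rw [h2]; decide)]
          omega
        · rw [if_pos (decide_eq_false h1), if_pos (decide_eq_false h2)]
          omega
end OneCoalgebraAux

section TensorZipAux

variable {R : Type u} [CommRing R]
variable {H₁ H₂ : Type u} [AddCommGroup H₁] [Module R H₁] [AddCommGroup H₂] [Module R H₂]

/-- The "zip" map `H₁^{⊗N} ⊗ H₂^{⊗N} → (H₁ ⊗ H₂)^{⊗N}`. -/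
def zipT : (N : ℕ) → ((Tpow R H₁ N) ⊗[R] (Tpow R H₂ N) →ₗ[R] Tpow R (H₁ ⊗[R] H₂) N)
  | 0 => (TensorProduct.lid R R).toLinearMap
  | N + 1 =>
      (TensorProduct.map LinearMap.id (zipT N))
        ∘ₗ (TensorProduct.tensorTensorTensorComm R H₁ (Tpow R H₁ N) H₂ (Tpow R H₂ N)).toLinearMap

theorem zipT_tmul_succ (N : ℕ) (x : H₁) (t₁ : Tpow R H₁ N) (y : H₂) (t₂ : Tpow R H₂ N) :
    zipT (N + 1) ((x ⊗ₜ[R] t₁) ⊗ₜ[R] (y ⊗ₜ[R] t₂))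
      = (x ⊗ₜ[R] y) ⊗ₜ[R] (zipT N (t₁ ⊗ₜ[R] t₂) : Tpow R (H₁ ⊗[R] H₂) N) := by
  show (TensorProduct.map LinearMap.id (zipT N))
      ((TensorProduct.tensorTensorTensorComm R H₁ (Tpow R H₁ N) H₂ (Tpow R H₂ N))
        ((x ⊗ₜ[R] t₁) ⊗ₜ[R] (y ⊗ₜ[R] t₂))) = _
  rw [TensorProduct.tensorTensorTensorComm_tmul, TensorProduct.map_tmul]
  rfl

theorem zip_step (Δ₁ : H₁ →ₗ[R] H₁ ⊗[R] H₁) (Δ₂ : H₂ →ₗ[R] H₂ ⊗[R] H₂) (N : ℕ) :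
    (TensorProduct.assoc R (H₁ ⊗[R] H₂) (H₁ ⊗[R] H₂) (Tpow R (H₁ ⊗[R] H₂) N)).toLinearMap
        ∘ₗ (LinearMap.rTensor (Tpow R (H₁ ⊗[R] H₂) N) (tensorComul Δ₁ Δ₂))
        ∘ₗ zipT (N + 1)
      = zipT (N + 2)
        ∘ₗ TensorProduct.map
            ((TensorProduct.assoc R H₁ H₁ (Tpow R H₁ N)).toLinearMap
              ∘ₗ LinearMap.rTensor (Tpow R H₁ N) Δ₁)
            ((TensorProduct.assoc R H₂ H₂ (Tpow R H₂ N)).toLinearMap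
              ∘ₗ LinearMap.rTensor (Tpow R H₂ N) Δ₂) := by
  apply TensorProduct.ext_fourfold'
  intro x t₁ y t₂
  have key : ∀ (w : H₁ ⊗[R] H₁) (z : H₂ ⊗[R] H₂),
      (TensorProduct.assoc R (H₁ ⊗[R] H₂) (H₁ ⊗[R] H₂) (Tpow R (H₁ ⊗[R] H₂) N)).toLinearMap
          (((TensorProduct.tensorTensorTensorComm R H₁ H₁ H₂ H₂) (w ⊗ₜ[R] z))
            ⊗ₜ[R] (zipT N (t₁ ⊗ₜ[R] t₂) : Tpow R (H₁ ⊗[R] H₂) N))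
        = zipT (N + 2)
            (((TensorProduct.assoc R H₁ H₁ (Tpow R H₁ N)) (w ⊗ₜ[R] t₁))
              ⊗ₜ[R] ((TensorProduct.assoc R H₂ H₂ (Tpow R H₂ N)) (z ⊗ₜ[R] t₂))) := by
    intro w z
    induction w using TensorProduct.induction_on with
    | zero => simp; erw [TensorProduct.zero_tmul, map_zero]; rfl
    | tmul x₁ x₂ =>
        induction z using TensorProduct.induction_on with
        | zero => simp; erw [TensorProduct.tmul_zero, map_zero]; rfl
        | tmul y₁ y₂ =>
            rw [TensorProduct.tensorTensorTensorComm_tmul,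
              TensorProduct.assoc_tmul x₁ x₂ t₁, TensorProduct.assoc_tmul y₁ y₂ t₂]
            erw [zipT_tmul_succ (N + 1) x₁ (x₂ ⊗ₜ[R] t₁) y₁ (y₂ ⊗ₜ[R] t₂),
              zipT_tmul_succ N x₂ t₁ y₂ t₂]
        | add z₁ z₂ ih₁ ih₂ =>
            simp only [TensorProduct.tmul_add, TensorProduct.add_tmul, map_add, ih₁, ih₂]
            erw [TensorProduct.tmul_add, map_add]; rfl
    | add w₁ w₂ ih₁ ih₂ =>
        simp only [TensorProduct.tmul_add, TensorProduct.add_tmul, map_add, ih₁, ih₂]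
        erw [TensorProduct.add_tmul, map_add]; rfl
  calc ((TensorProduct.assoc R (H₁ ⊗[R] H₂) (H₁ ⊗[R] H₂) (Tpow R (H₁ ⊗[R] H₂) N)).toLinearMap
        ∘ₗ (LinearMap.rTensor (Tpow R (H₁ ⊗[R] H₂) N) (tensorComul Δ₁ Δ₂))
        ∘ₗ zipT (N + 1)) ((x ⊗ₜ[R] t₁) ⊗ₜ[R] (y ⊗ₜ[R] t₂))
      = (TensorProduct.assoc R (H₁ ⊗[R] H₂) (H₁ ⊗[R] H₂) (Tpow R (H₁ ⊗[R] H₂) N)).toLinearMap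
          ((LinearMap.rTensor (Tpow R (H₁ ⊗[R] H₂) N) (tensorComul Δ₁ Δ₂))
            (zipT (N + 1) ((x ⊗ₜ[R] t₁) ⊗ₜ[R] (y ⊗ₜ[R] t₂)))) := rfl
    _ = (TensorProduct.assoc R (H₁ ⊗[R] H₂) (H₁ ⊗[R] H₂) (Tpow R (H₁ ⊗[R] H₂) N)).toLinearMap
          ((tensorComul Δ₁ Δ₂ (x ⊗ₜ[R] y)) ⊗ₜ[R] (zipT N (t₁ ⊗ₜ[R] t₂) : Tpow R (H₁ ⊗[R] H₂) N)) := by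
        rw [zipT_tmul_succ, LinearMap.rTensor_tmul]
    _ = (TensorProduct.assoc R (H₁ ⊗[R] H₂) (H₁ ⊗[R] H₂) (Tpow R (H₁ ⊗[R] H₂) N)).toLinearMap
          (((TensorProduct.tensorTensorTensorComm R H₁ H₁ H₂ H₂) ((Δ₁ x) ⊗ₜ[R] (Δ₂ y)))
            ⊗ₜ[R] (zipT N (t₁ ⊗ₜ[R] t₂) : Tpow R (H₁ ⊗[R] H₂) N)) := by
        rw [show tensorComul Δ₁ Δ₂ (x ⊗ₜ[R] y)
            = (TensorProduct.tensorTensorTensorComm R H₁ H₁ H₂ H₂) ((Δ₁ x) ⊗ₜ[R] (Δ₂ y)) from by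
          show (TensorProduct.tensorTensorTensorComm R H₁ H₁ H₂ H₂).toLinearMap
              (TensorProduct.map Δ₁ Δ₂ (x ⊗ₜ[R] y)) = _
          rw [TensorProduct.map_tmul]; rfl]
    _ = @id ((H₁ ⊗[R] H₂) ⊗[R] ((H₁ ⊗[R] H₂) ⊗[R] Tpow R (H₁ ⊗[R] H₂) N)) (zipT (N + 2)
          (((TensorProduct.assoc R H₁ H₁ (Tpow R H₁ N)) ((Δ₁ x) ⊗ₜ[R] t₁))
            ⊗ₜ[R] ((TensorProduct.assoc R H₂ H₂ (Tpow R H₂ N)) ((Δ₂ y) ⊗ₜ[R] t₂)))) := key _ _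
    _ = @id ((H₁ ⊗[R] H₂) ⊗[R] ((H₁ ⊗[R] H₂) ⊗[R] Tpow R (H₁ ⊗[R] H₂) N)) ((zipT (N + 2)
        ∘ₗ TensorProduct.map
            ((TensorProduct.assoc R H₁ H₁ (Tpow R H₁ N)).toLinearMap
              ∘ₗ LinearMap.rTensor (Tpow R H₁ N) Δ₁)
            ((TensorProduct.assoc R H₂ H₂ (Tpow R H₂ N)).toLinearMap
              ∘ₗ LinearMap.rTensor (Tpow R H₂ N) Δ₂)) ((x ⊗ₜ[R] t₁) ⊗ₜ[R] (y ⊗ₜ[R] t₂))) := by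
        dsimp only [id]
        rw [LinearMap.comp_apply]
        erw [TensorProduct.map_tmul ((TensorProduct.assoc R H₁ H₁ (Tpow R H₁ N)).toLinearMap
                ∘ₗ LinearMap.rTensor (Tpow R H₁ N) Δ₁)
              ((TensorProduct.assoc R H₂ H₂ (Tpow R H₂ N)).toLinearMap
                ∘ₗ LinearMap.rTensor (Tpow R H₂ N) Δ₂) (x ⊗ₜ[R] t₁) (y ⊗ₜ[R] t₂)]
        rfl

theorem iterComul_tensor (Δ₁ : H₁ →ₗ[R] H₁ ⊗[R] H₁) (ε₁ : H₁ →ₗ[R] R)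
    (Δ₂ : H₂ →ₗ[R] H₂ ⊗[R] H₂) (ε₂ : H₂ →ₗ[R] R) :
    ∀ N, iterComul (tensorComul Δ₁ Δ₂) (tensorCounit ε₁ ε₂) N
      = zipT N ∘ₗ TensorProduct.map (iterComul Δ₁ ε₁ N) (iterComul Δ₂ ε₂ N)
  | 0 => rfl
  | 1 => by
      apply TensorProduct.ext'
      intro x y
      show (TensorProduct.rid R (H₁ ⊗[R] H₂)).symm (x ⊗ₜ[R] y)
        = zipT 1 (TensorProduct.map ((TensorProduct.rid R H₁).symm.toLinearMap)
            ((TensorProduct.rid R H₂).symm.toLinearMap) (x ⊗ₜ[R] y))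
      rw [TensorProduct.map_tmul]
      show (x ⊗ₜ[R] y) ⊗ₜ[R] (1 : R)
        = zipT 1 ((x ⊗ₜ[R] (1 : R)) ⊗ₜ[R] (y ⊗ₜ[R] (1 : R)))
      erw [show ((x ⊗ₜ[R] (1 : R)) : H₁ ⊗[R] R) ⊗ₜ[R] ((y ⊗ₜ[R] (1 : R)) : H₂ ⊗[R] R)
            = ((x ⊗ₜ[R] ((1 : R) : Tpow R H₁ 0)) ⊗ₜ[R] (y ⊗ₜ[R] ((1 : R) : Tpow R H₂ 0))) from rfl,
        zipT_tmul_succ]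
      show (x ⊗ₜ[R] y) ⊗ₜ[R] (1 : R)
        = (x ⊗ₜ[R] y) ⊗ₜ[R] ((TensorProduct.lid R R) ((1 : R) ⊗ₜ[R] (1 : R)))
      rw [TensorProduct.lid_tmul, one_smul]
  | N + 2 => by
      have ih := iterComul_tensor Δ₁ ε₁ Δ₂ ε₂ (N + 1)
      show (TensorProduct.assoc R (H₁ ⊗[R] H₂) (H₁ ⊗[R] H₂) (Tpow R (H₁ ⊗[R] H₂) N)).toLinearMap
          ∘ₗ (LinearMap.rTensor (Tpow R (H₁ ⊗[R] H₂) N) (tensorComul Δ₁ Δ₂))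
          ∘ₗ iterComul (tensorComul Δ₁ Δ₂) (tensorCounit ε₁ ε₂) (N + 1) = _
      rw [ih]
      have hs := zip_step Δ₁ Δ₂ N
      have expand : zipT (N + 2)
            ∘ₗ TensorProduct.map (iterComul Δ₁ ε₁ (N + 2)) (iterComul Δ₂ ε₂ (N + 2))
          = (zipT (N + 2)
              ∘ₗ TensorProduct.map
                ((TensorProduct.assoc R H₁ H₁ (Tpow R H₁ N)).toLinearMap
                  ∘ₗ LinearMap.rTensor (Tpow R H₁ N) Δ₁)
                ((TensorProduct.assoc R H₂ H₂ (Tpow R H₂ N)).toLinearMap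
                  ∘ₗ LinearMap.rTensor (Tpow R H₂ N) Δ₂))
            ∘ₗ TensorProduct.map (iterComul Δ₁ ε₁ (N + 1)) (iterComul Δ₂ ε₂ (N + 1)) := by
        rw [LinearMap.comp_assoc]
        apply TensorProduct.ext'
        intro a b
        rfl
      rw [expand, ← hs]
      rfl

end TensorZipAux

section SumZipAux

variable {R : Type u} [CommRing R]
variable {H₁ H₂ : Type u} [AddCommGroup H₁] [Module R H₁] [AddCommGroup H₂] [Module R H₂]

theorem map_sum_right {ι : Type*} (s : Finset ι) {A C D : Type u}
    [AddCommGroup A] [Module R A]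
    [AddCommGroup C] [Module R C] [AddCommGroup D] [Module R D]
    (f : A →ₗ[R] A) (g : ι → (C →ₗ[R] D)) :
    TensorProduct.map f (∑ i ∈ s, g i) = ∑ i ∈ s, TensorProduct.map f (g i) := by
  classical
  induction s using Finset.induction_on with
  | empty =>
      simp only [Finset.sum_empty]
      apply TensorProduct.ext'
      intro x y
      simp
  | insert _ _ hns ih =>
      rw [Finset.sum_insert hns, Finset.sum_insert hns, TensorProduct.map_add_right, ih]

theorem my_sum_comp {ι : Type*} (s : Finset ι) {A B C : Type u}
    [AddCommGroup A] [Module R A] [AddCommGroup B] [Module R B]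
    [AddCommGroup C] [Module R C]
    (f : ι → (B →ₗ[R] C)) (g : A →ₗ[R] B) :
    (∑ i ∈ s, f i) ∘ₗ g = ∑ i ∈ s, (f i ∘ₗ g) := by
  apply LinearMap.ext; intro x
  simp

theorem ttc_nat {A A' B B' C C' D D' : Type u}
    [AddCommGroup A] [Module R A] [AddCommGroup A'] [Module R A']
    [AddCommGroup B] [Module R B] [AddCommGroup B'] [Module R B']
    [AddCommGroup C] [Module R C] [AddCommGroup C'] [Module R C']
    [AddCommGroup D] [Module R D] [AddCommGroup D'] [Module R D']
    (f : A →ₗ[R] A') (g : B →ₗ[R] B') (h : C →ₗ[R] C') (k : D →ₗ[R] D') :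
    (TensorProduct.tensorTensorTensorComm R A' B' C' D').toLinearMap
        ∘ₗ TensorProduct.map (TensorProduct.map f g) (TensorProduct.map h k)
      = TensorProduct.map (TensorProduct.map f h) (TensorProduct.map g k)
        ∘ₗ (TensorProduct.tensorTensorTensorComm R A B C D).toLinearMap := by
  apply TensorProduct.ext_fourfold'
  intro a b c d
  simp

theorem eAug_tensor (ε₁ : H₁ →ₗ[R] R) (ε₂ : H₂ →ₗ[R] R) (u₁ : H₁) (u₂ : H₂) :
    eAug (tensorCounit ε₁ ε₂) (u₁ ⊗ₜ[R] u₂)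
      = TensorProduct.map (eAug ε₁ u₁) (eAug ε₂ u₂)
        + TensorProduct.map (eAug ε₁ u₁) (pAug ε₂ u₂)
        + TensorProduct.map (pAug ε₁ u₁) (eAug ε₂ u₂) := by
  apply TensorProduct.ext'
  intro x y
  simp only [eAug, pAug, tensorCounit, LinearMap.add_apply, LinearMap.sub_apply,
    LinearMap.id_apply, LinearMap.comp_apply, TensorProduct.map_tmul,
    LinearMap.toSpanSingleton_apply, LinearEquiv.coe_coe, TensorProduct.lid_tmul]
  simp only [TensorProduct.sub_tmul, TensorProduct.tmul_sub, TensorProduct.smul_tmul',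
    TensorProduct.tmul_smul, smul_smul, smul_eq_mul, mul_comm]
  abel

/-- One summand of the expansion. -/
theorem zip_term_eq (ε₁ : H₁ →ₗ[R] R) (ε₂ : H₂ →ₗ[R] R) (u₁ : H₁) (u₂ : H₂)
    (N : ℕ) (c₁ c₂ : Bool) (f₁ : Fin N → Bool) (f₂ : Fin N → Bool) :
    zipT (N + 1) ∘ₗ TensorProduct.map
        (mapIdx ε₁ u₁ (N + 1) (Fin.cons c₁ f₁)) (mapIdx ε₂ u₂ (N + 1) (Fin.cons c₂ f₂))
      = TensorProduct.map (TensorProduct.map (opOf ε₁ u₁ c₁) (opOf ε₂ u₂ c₂))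
          (zipT N ∘ₗ TensorProduct.map (mapIdx ε₁ u₁ N f₁) (mapIdx ε₂ u₂ N f₂))
        ∘ₗ (TensorProduct.tensorTensorTensorComm R H₁ (Tpow R H₁ N) H₂ (Tpow R H₂ N)).toLinearMap := by
  rw [mapIdx_cons, mapIdx_cons]
  show ((TensorProduct.map LinearMap.id (zipT N))
      ∘ₗ (TensorProduct.tensorTensorTensorComm R H₁ (Tpow R H₁ N) H₂ (Tpow R H₂ N)).toLinearMap)
      ∘ₗ TensorProduct.map
        (TensorProduct.map (opOf ε₁ u₁ c₁) (mapIdx ε₁ u₁ N f₁))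
        (TensorProduct.map (opOf ε₂ u₂ c₂) (mapIdx ε₂ u₂ N f₂)) = _
  rw [LinearMap.comp_assoc, ttc_nat, ← LinearMap.comp_assoc, ← TensorProduct.map_comp,
    LinearMap.id_comp]

theorem mapPow_zipT (ε₁ : H₁ →ₗ[R] R) (ε₂ : H₂ →ₗ[R] R) (u₁ : H₁) (u₂ : H₂) :
    ∀ N : ℕ, (mapPow (eAug (tensorCounit ε₁ ε₂) (u₁ ⊗ₜ[R] u₂)) N) ∘ₗ zipT N
      = ∑ g : Fin N → Fin 3,
          zipT N ∘ₗ TensorProduct.map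
            (mapIdx ε₁ u₁ N (fun i => decide (g i = 1)))
            (mapIdx ε₂ u₂ N (fun i => decide (g i = 2)))
  | 0 => by
      rw [Fintype.sum_unique]
      apply TensorProduct.ext'
      intro x y
      rfl
  | N + 1 => by
      have ih := mapPow_zipT ε₁ ε₂ u₁ u₂ N
      -- left hand side
      show TensorProduct.map (eAug (tensorCounit ε₁ ε₂) (u₁ ⊗ₜ[R] u₂))
            (mapPow (eAug (tensorCounit ε₁ ε₂) (u₁ ⊗ₜ[R] u₂)) N)
          ∘ₗ ((TensorProduct.map LinearMap.id (zipT N))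
            ∘ₗ (TensorProduct.tensorTensorTensorComm R H₁ (Tpow R H₁ N) H₂ (Tpow R H₂ N)).toLinearMap)
        = _
      rw [← LinearMap.comp_assoc, ← TensorProduct.map_comp, LinearMap.comp_id, ih,
        map_sum_right, eAug_tensor ε₁ ε₂ u₁ u₂]
      simp only [TensorProduct.map_add_left, my_sum_comp, LinearMap.add_comp]
      rw [Finset.sum_add_distrib, Finset.sum_add_distrib]
      -- right hand side: reindex
      rw [← Equiv.sum_comp (Fin.consEquiv (fun _ : Fin (N + 1) => Fin 3))]
      rw [Fintype.sum_prod_type]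
      rw [Fin.sum_univ_three]
      have key : ∀ (k : Fin 3) (g : Fin N → Fin 3),
          zipT (N + 1) ∘ₗ TensorProduct.map
            (mapIdx ε₁ u₁ (N + 1) (fun i => decide ((Fin.cons k g : Fin (N + 1) → Fin 3) i = 1)))
            (mapIdx ε₂ u₂ (N + 1) (fun i => decide ((Fin.cons k g : Fin (N + 1) → Fin 3) i = 2)))
          = TensorProduct.map
              (TensorProduct.map (opOf ε₁ u₁ (decide (k = 1))) (opOf ε₂ u₂ (decide (k = 2))))
              (zipT N ∘ₗ TensorProduct.map
                (mapIdx ε₁ u₁ N (fun i => decide (g i = 1)))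
                (mapIdx ε₂ u₂ N (fun i => decide (g i = 2))))
            ∘ₗ (TensorProduct.tensorTensorTensorComm R H₁ (Tpow R H₁ N) H₂ (Tpow R H₂ N)).toLinearMap := by
        intro k g
        rw [decide_cons, decide_cons, zip_term_eq]
      have hS0 : (∑ g : Fin N → Fin 3,
            zipT (N + 1) ∘ₗ TensorProduct.map
              (mapIdx ε₁ u₁ (N + 1) (fun i => decide
                ((Fin.consEquiv (fun _ : Fin (N + 1) => Fin 3)) ((0 : Fin 3), g) i = 1)))
              (mapIdx ε₂ u₂ (N + 1) (fun i => decide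
                ((Fin.consEquiv (fun _ : Fin (N + 1) => Fin 3)) ((0 : Fin 3), g) i = 2))))
          = ∑ g : Fin N → Fin 3,
              TensorProduct.map (TensorProduct.map (eAug ε₁ u₁) (eAug ε₂ u₂))
                (zipT N ∘ₗ TensorProduct.map
                  (mapIdx ε₁ u₁ N (fun i => decide (g i = 1)))
                  (mapIdx ε₂ u₂ N (fun i => decide (g i = 2))))
              ∘ₗ (TensorProduct.tensorTensorTensorComm R H₁ (Tpow R H₁ N) H₂ (Tpow R H₂ N)).toLinearMap := by
        apply Finset.sum_congr rfl
        intro g _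
        rw [show ((Fin.consEquiv (fun _ : Fin (N + 1) => Fin 3)) ((0 : Fin 3), g))
            = (Fin.cons (0 : Fin 3) g : Fin (N + 1) → Fin 3) from rfl, key 0 g,
          show (decide ((0 : Fin 3) = 1)) = false from rfl,
          show (decide ((0 : Fin 3) = 2)) = false from rfl,
          show opOf ε₁ u₁ false = eAug ε₁ u₁ from rfl,
          show opOf ε₂ u₂ false = eAug ε₂ u₂ from rfl]
      have hS1 : (∑ g : Fin N → Fin 3,
            zipT (N + 1) ∘ₗ TensorProduct.map
              (mapIdx ε₁ u₁ (N + 1) (fun i => decide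
                ((Fin.consEquiv (fun _ : Fin (N + 1) => Fin 3)) ((1 : Fin 3), g) i = 1)))
              (mapIdx ε₂ u₂ (N + 1) (fun i => decide
                ((Fin.consEquiv (fun _ : Fin (N + 1) => Fin 3)) ((1 : Fin 3), g) i = 2))))
          = ∑ g : Fin N → Fin 3,
              TensorProduct.map (TensorProduct.map (pAug ε₁ u₁) (eAug ε₂ u₂))
                (zipT N ∘ₗ TensorProduct.map
                  (mapIdx ε₁ u₁ N (fun i => decide (g i = 1)))
                  (mapIdx ε₂ u₂ N (fun i => decide (g i = 2))))
              ∘ₗ (TensorProduct.tensorTensorTensorComm R H₁ (Tpow R H₁ N) H₂ (Tpow R H₂ N)).toLinearMap := by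
        apply Finset.sum_congr rfl
        intro g _
        rw [show ((Fin.consEquiv (fun _ : Fin (N + 1) => Fin 3)) ((1 : Fin 3), g))
            = (Fin.cons (1 : Fin 3) g : Fin (N + 1) → Fin 3) from rfl, key 1 g,
          show (decide ((1 : Fin 3) = 1)) = true from rfl,
          show (decide ((1 : Fin 3) = 2)) = false from rfl,
          show opOf ε₁ u₁ true = pAug ε₁ u₁ from rfl,
          show opOf ε₂ u₂ false = eAug ε₂ u₂ from rfl]
      have hS2 : (∑ g : Fin N → Fin 3,
            zipT (N + 1) ∘ₗ TensorProduct.map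
              (mapIdx ε₁ u₁ (N + 1) (fun i => decide
                ((Fin.consEquiv (fun _ : Fin (N + 1) => Fin 3)) ((2 : Fin 3), g) i = 1)))
              (mapIdx ε₂ u₂ (N + 1) (fun i => decide
                ((Fin.consEquiv (fun _ : Fin (N + 1) => Fin 3)) ((2 : Fin 3), g) i = 2))))
          = ∑ g : Fin N → Fin 3,
              TensorProduct.map (TensorProduct.map (eAug ε₁ u₁) (pAug ε₂ u₂))
                (zipT N ∘ₗ TensorProduct.map
                  (mapIdx ε₁ u₁ N (fun i => decide (g i = 1)))
                  (mapIdx ε₂ u₂ N (fun i => decide (g i = 2))))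
              ∘ₗ (TensorProduct.tensorTensorTensorComm R H₁ (Tpow R H₁ N) H₂ (Tpow R H₂ N)).toLinearMap := by
        apply Finset.sum_congr rfl
        intro g _
        rw [show ((Fin.consEquiv (fun _ : Fin (N + 1) => Fin 3)) ((2 : Fin 3), g))
            = (Fin.cons (2 : Fin 3) g : Fin (N + 1) → Fin 3) from rfl, key 2 g,
          show (decide ((2 : Fin 3) = 1)) = false from rfl,
          show (decide ((2 : Fin 3) = 2)) = true from rfl,
          show opOf ε₁ u₁ false = eAug ε₁ u₁ from rfl,
          show opOf ε₂ u₂ true = pAug ε₂ u₂ from rfl]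
      rw [hS0, hS1, hS2]
      abel

theorem stmt2 {R : Type u} [CommRing R]
    {H₁ H₂ : Type u} [AddCommGroup H₁] [Module R H₁] [AddCommGroup H₂] [Module R H₂]
    [Coalgebra R H₁] [Coalgebra R H₂] (u₁ : H₁) (u₂ : H₂)
    (hεu₁ : Coalgebra.counit (R := R) (A := H₁) u₁ = 1)
    (hΔu₁ : Coalgebra.comul (R := R) (A := H₁) u₁ = u₁ ⊗ₜ[R] u₁)
    (hεu₂ : Coalgebra.counit (R := R) (A := H₂) u₂ = 1)
    (hΔu₂ : Coalgebra.comul (R := R) (A := H₂) u₂ = u₂ ⊗ₜ[R] u₂)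
    (n m : ℕ) (a : H₁) (b : H₂)
    (ha : a ∈ corad (Coalgebra.comul (R := R) (A := H₁))
      (Coalgebra.counit (R := R) (A := H₁)) u₁ n)
    (hb : b ∈ corad (Coalgebra.comul (R := R) (A := H₂))
      (Coalgebra.counit (R := R) (A := H₂)) u₂ m) :
    a ⊗ₜ[R] b ∈ corad
      (tensorComul (Coalgebra.comul (R := R) (A := H₁)) (Coalgebra.comul (R := R) (A := H₂)))
      (tensorCounit (Coalgebra.counit (R := R) (A := H₁)) (Coalgebra.counit (R := R) (A := H₂)))
      (u₁ ⊗ₜ[R] u₂) (n + m) := by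
  classical
  simp only [corad, LinearMap.mem_ker] at ha hb ⊢
  set N := n + m + 1 with hN
  have hIC := iterComul_tensor (Coalgebra.comul (R := R) (A := H₁))
    (Coalgebra.counit (R := R) (A := H₁)) (Coalgebra.comul (R := R) (A := H₂))
    (Coalgebra.counit (R := R) (A := H₂)) N
  have hMP := mapPow_zipT (Coalgebra.counit (R := R) (A := H₁))
    (Coalgebra.counit (R := R) (A := H₂)) u₁ u₂ N
  have h1 : iterComul
        (tensorComul (Coalgebra.comul (R := R) (A := H₁)) (Coalgebra.comul (R := R) (A := H₂)))
        (tensorCounit (Coalgebra.counit (R := R) (A := H₁)) (Coalgebra.counit (R := R) (A := H₂)))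
        N (a ⊗ₜ[R] b)
      = zipT N ((iterComul (Coalgebra.comul (R := R) (A := H₁))
            (Coalgebra.counit (R := R) (A := H₁)) N a)
          ⊗ₜ[R] (iterComul (Coalgebra.comul (R := R) (A := H₂))
            (Coalgebra.counit (R := R) (A := H₂)) N b)) := by
    have h := LinearMap.congr_fun hIC (a ⊗ₜ[R] b)
    rw [h]
    rw [show (zipT N ∘ₗ TensorProduct.map
        (iterComul (Coalgebra.comul (R := R) (A := H₁)) (Coalgebra.counit (R := R) (A := H₁)) N)
        (iterComul (Coalgebra.comul (R := R) (A := H₂)) (Coalgebra.counit (R := R) (A := H₂)) N))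
        (a ⊗ₜ[R] b)
      = zipT N (TensorProduct.map
          (iterComul (Coalgebra.comul (R := R) (A := H₁)) (Coalgebra.counit (R := R) (A := H₁)) N)
          (iterComul (Coalgebra.comul (R := R) (A := H₂)) (Coalgebra.counit (R := R) (A := H₂)) N)
          (a ⊗ₜ[R] b)) from rfl]
    rw [TensorProduct.map_tmul]
  show (mapPow (eAug
        (tensorCounit (Coalgebra.counit (R := R) (A := H₁)) (Coalgebra.counit (R := R) (A := H₂)))
        (u₁ ⊗ₜ[R] u₂)) N)
      (iterComul
        (tensorComul (Coalgebra.comul (R := R) (A := H₁)) (Coalgebra.comul (R := R) (A := H₂)))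
        (tensorCounit (Coalgebra.counit (R := R) (A := H₁)) (Coalgebra.counit (R := R) (A := H₂)))
        N (a ⊗ₜ[R] b)) = 0
  rw [h1]
  have h2 := LinearMap.congr_fun hMP
    ((iterComul (Coalgebra.comul (R := R) (A := H₁))
        (Coalgebra.counit (R := R) (A := H₁)) N a)
      ⊗ₜ[R] (iterComul (Coalgebra.comul (R := R) (A := H₂))
        (Coalgebra.counit (R := R) (A := H₂)) N b))
  rw [show (mapPow (eAug
        (tensorCounit (Coalgebra.counit (R := R) (A := H₁)) (Coalgebra.counit (R := R) (A := H₂)))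
        (u₁ ⊗ₜ[R] u₂)) N)
      (zipT N ((iterComul (Coalgebra.comul (R := R) (A := H₁))
            (Coalgebra.counit (R := R) (A := H₁)) N a)
          ⊗ₜ[R] (iterComul (Coalgebra.comul (R := R) (A := H₂))
            (Coalgebra.counit (R := R) (A := H₂)) N b)))
    = ((mapPow (eAug
        (tensorCounit (Coalgebra.counit (R := R) (A := H₁)) (Coalgebra.counit (R := R) (A := H₂)))
        (u₁ ⊗ₜ[R] u₂)) N) ∘ₗ zipT N)
      ((iterComul (Coalgebra.comul (R := R) (A := H₁))
            (Coalgebra.counit (R := R) (A := H₁)) N a)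
          ⊗ₜ[R] (iterComul (Coalgebra.comul (R := R) (A := H₂))
            (Coalgebra.counit (R := R) (A := H₂)) N b)) from rfl, h2]
  rw [LinearMap.sum_apply]
  apply Finset.sum_eq_zero
  intro g _
  have hbound := cntE_bound N g
  have ht : (zipT N ∘ₗ TensorProduct.map
      (mapIdx (Coalgebra.counit (R := R) (A := H₁)) u₁ N (fun i => decide (g i = 1)))
      (mapIdx (Coalgebra.counit (R := R) (A := H₂)) u₂ N (fun i => decide (g i = 2))))
      ((iterComul (Coalgebra.comul (R := R) (A := H₁))
            (Coalgebra.counit (R := R) (A := H₁)) N a)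
          ⊗ₜ[R] (iterComul (Coalgebra.comul (R := R) (A := H₂))
            (Coalgebra.counit (R := R) (A := H₂)) N b))
    = zipT N ((mapIdx (Coalgebra.counit (R := R) (A := H₁)) u₁ N (fun i => decide (g i = 1))
          (iterComul (Coalgebra.comul (R := R) (A := H₁))
            (Coalgebra.counit (R := R) (A := H₁)) N a))
        ⊗ₜ[R] (mapIdx (Coalgebra.counit (R := R) (A := H₂)) u₂ N (fun i => decide (g i = 2))
          (iterComul (Coalgebra.comul (R := R) (A := H₂))
            (Coalgebra.counit (R := R) (A := H₂)) N b))) := by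
    show zipT N (TensorProduct.map
        (mapIdx (Coalgebra.counit (R := R) (A := H₁)) u₁ N (fun i => decide (g i = 1)))
        (mapIdx (Coalgebra.counit (R := R) (A := H₂)) u₂ N (fun i => decide (g i = 2)))
        ((iterComul (Coalgebra.comul (R := R) (A := H₁))
            (Coalgebra.counit (R := R) (A := H₁)) N a)
          ⊗ₜ[R] (iterComul (Coalgebra.comul (R := R) (A := H₂))
            (Coalgebra.counit (R := R) (A := H₂)) N b))) = _
    rw [TensorProduct.map_tmul]
  rw [ht]
  by_cases hc : n + 1 ≤ cntE N (fun i => decide (g i = 1))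
  · rw [mapIdx_iterComul_eq_zero (Coalgebra.comul (R := R) (A := H₁))
      (Coalgebra.counit (R := R) (A := H₁)) u₁ Coalgebra.coassoc
      Coalgebra.rTensor_counit_comp_comul Coalgebra.lTensor_counit_comp_comul
      hεu₁ hΔu₁ ha N _ hc, TensorProduct.zero_tmul, map_zero]
  · have hc2 : m + 1 ≤ cntE N (fun i => decide (g i = 2)) := by omega
    rw [mapIdx_iterComul_eq_zero (Coalgebra.comul (R := R) (A := H₂))
      (Coalgebra.counit (R := R) (A := H₂)) u₂ Coalgebra.coassoc
      Coalgebra.rTensor_counit_comp_comul Coalgebra.lTensor_counit_comp_comul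
      hεu₂ hΔu₂ hb N _ hc2, TensorProduct.tmul_zero, map_zero]
end SumZipAux
end
end

section
/- Let k be a commutative ring and H a bialgebra over k, regarded as a coaugmented coalgebra via its unit. If a ∈ P_n(H) and b ∈ P_m(H), then the product a·b lies in P_{n+m}(H). -/
open TensorProduct

noncomputable section

universe u

variable (R : Type u) [CommRing R]

variable {R}
variable {H : Type u} [AddCommGroup H] [Module R H]

namespace CoradAux

variable (R : Type u) [CommRing R] (A : Type u) [Ring A] [Bialgebra R A]

/-- shorthand for iterated comultiplication -/
def c (N : ℕ) : A →ₗ[R] Tpow R A N :=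
  iterComul (Coalgebra.comul (R := R) (A := A)) (Coalgebra.counit (R := R) (A := A)) N

/-- shorthand for `e = id - unit∘counit` -/
def e : A →ₗ[R] A := eAug (Coalgebra.counit (R := R) (A := A)) 1

/-- shorthand for `δ^n` -/
def d (N : ℕ) : A →ₗ[R] Tpow R A N :=
  deltaPow (Coalgebra.comul (R := R) (A := A)) (Coalgebra.counit (R := R) (A := A)) 1 N

variable {R A}

lemma e_one : e R A 1 = 0 := by
  simp [e, eAug, Bialgebra.counit_one]

lemma c_succ (N : ℕ) :
    c R A (N + 1) =
      (LinearMap.lTensor A (c R A N)) ∘ₗ (Coalgebra.comul (R := R) (A := A)) := by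
  induction N with
  | zero =>
      ext a
      show (TensorProduct.rid R A).symm a
        = LinearMap.lTensor A Coalgebra.counit (Coalgebra.comul a)
      rw [TensorProduct.rid_symm_apply]
      have := LinearMap.congr_fun (Coalgebra.lTensor_counit_comp_comul (R := R) (A := A)) a
      simpa using this.symm
  | succ N ih =>
      ext a
      show (TensorProduct.assoc R A A (Tpow R A N)).toLinearMap
          ((LinearMap.rTensor (Tpow R A N) Coalgebra.comul) ((c R A (N+1)) a))
        = LinearMap.lTensor A (c R A (N+1)) (Coalgebra.comul a)
      rw [ih]
      simp only [LinearMap.coe_comp, Function.comp_apply, LinearMap.lTensor_comp,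
        LinearEquiv.coe_coe]
      have coas := Coalgebra.coassoc_apply (R := R) (A := A) a
      -- goal: assoc (rTensor Δ (lTensor (c N) (Δ a))) = lTensor (lTensor (c N) ∘ Δ) (Δ a)
      have key : ∀ y : A ⊗[R] A,
          (TensorProduct.assoc R A A (Tpow R A N))
              ((LinearMap.rTensor (Tpow R A N) Coalgebra.comul)
                ((LinearMap.lTensor A (c R A N)) y))
            = (LinearMap.lTensor A (LinearMap.lTensor A (c R A N)))
                ((TensorProduct.assoc R A A A)
                  ((LinearMap.rTensor A Coalgebra.comul) y)) := by
        intro y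
        induction y with
        | zero => simp
        | tmul p q =>
            simp only [LinearMap.lTensor_tmul, LinearMap.rTensor_tmul,
              TensorProduct.assoc_tmul]
            induction (Coalgebra.comul (R := R) p) with
            | zero => simp
            | tmul p1 p2 => simp
            | add u v hu hv =>
                simp only [TensorProduct.add_tmul, map_add, hu, hv]
        | add u v hu hv => simp [hu, hv]
      refine (key (Coalgebra.comul a)).trans ?_
      rw [coas]
      exact (LinearMap.congr_fun (LinearMap.lTensor_comp A (LinearMap.lTensor A (c R A N)) Coalgebra.comul) (Coalgebra.comul a)).symm

lemma d_succ (N : ℕ) :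
    d R A (N + 1) =
      (TensorProduct.map (e R A) (d R A N)) ∘ₗ (Coalgebra.comul (R := R) (A := A)) := by
  have h0 : d R A (N+1)
      = TensorProduct.map (e R A) (mapPow (e R A) N) ∘ₗ c R A (N+1) := rfl
  rw [h0, c_succ, ← LinearMap.comp_assoc]
  congr 1
  apply TensorProduct.ext'
  intro x y
  simp [d, deltaPow, c, e]

lemma comul_decomp (N : ℕ) :
    (LinearMap.lTensor A (c R A N)) ∘ₗ (Coalgebra.comul (R := R) (A := A))
      = (TensorProduct.map (e R A) (c R A N)) ∘ₗ (Coalgebra.comul (R := R) (A := A))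
        + (TensorProduct.mk R A (Tpow R A N) 1) ∘ₗ (c R A N) := by
  have hid : (LinearMap.id : A →ₗ[R] A)
      = e R A + LinearMap.toSpanSingleton R A 1 ∘ₗ (Coalgebra.counit (R := R) (A := A)) := by
    simp [e, eAug]
  have h4 : TensorProduct.map
        ((LinearMap.toSpanSingleton R A 1) ∘ₗ (Coalgebra.counit (R := R) (A := A)))
        (c R A N)
      = TensorProduct.map (LinearMap.toSpanSingleton R A 1) (c R A N)
          ∘ₗ LinearMap.rTensor A (Coalgebra.counit (R := R) (A := A)) := by
    show _ = TensorProduct.map (LinearMap.toSpanSingleton R A 1) (c R A N)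
          ∘ₗ TensorProduct.map (Coalgebra.counit (R := R) (A := A)) LinearMap.id
    rw [← TensorProduct.map_comp, LinearMap.comp_id]
  ext a
  have lhs : (LinearMap.lTensor A (c R A N)) (Coalgebra.comul (R := R) a)
      = TensorProduct.map LinearMap.id (c R A N) (Coalgebra.comul (R := R) a) := rfl
  simp only [LinearMap.comp_apply, LinearMap.add_apply, lhs]
  rw [hid, TensorProduct.map_add_left, LinearMap.add_apply, h4]
  congr 1
  rw [LinearMap.comp_apply]
  have h3 := LinearMap.congr_fun (Coalgebra.rTensor_counit_comp_comul (R := R) (A := A)) a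
  rw [LinearMap.comp_apply] at h3
  rw [h3]
  simp [TensorProduct.mk, LinearMap.toSpanSingleton_apply_one]

variable (R A) in
/-- componentwise multiplication on tensor powers -/
def mulPow : (N : ℕ) → (Tpow R A N ⊗[R] Tpow R A N →ₗ[R] Tpow R A N)
  | 0 => LinearMap.mul' R R
  | N + 1 =>
      (TensorProduct.map (LinearMap.mul' R A) (mulPow N))
        ∘ₗ (TensorProduct.tensorTensorTensorComm R A (Tpow R A N) A (Tpow R A N)).toLinearMap

lemma mulPow_tmul (N : ℕ) (h h' : A) (w w' : Tpow R A N) :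
    mulPow R A (N + 1) ((h ⊗ₜ[R] w) ⊗ₜ[R] (h' ⊗ₜ[R] w'))
      = (h * h') ⊗ₜ[R] (mulPow R A N (w ⊗ₜ[R] w')) := by
  show (TensorProduct.map (LinearMap.mul' R A) (mulPow R A N))
      ((TensorProduct.tensorTensorTensorComm R A (Tpow R A N) A (Tpow R A N))
        ((h ⊗ₜ[R] w) ⊗ₜ[R] (h' ⊗ₜ[R] w'))) = _
  rw [TensorProduct.tensorTensorTensorComm_tmul]
  simp [LinearMap.mul'_apply]

lemma c_mul (N : ℕ) (a b : A) :
    c R A N (a * b) = mulPow R A N ((c R A N a) ⊗ₜ[R] (c R A N b)) := by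
  induction N generalizing a b with
  | zero =>
      show (Coalgebra.counit (R := R)) (a * b) = _
      show (Coalgebra.counit (R := R)) (a * b)
        = LinearMap.mul' R R
            (((Coalgebra.counit (R := R)) a : R) ⊗ₜ[R] ((Coalgebra.counit (R := R)) b : R))
      rw [LinearMap.mul'_apply]
      exact Bialgebra.counit_mul a b
  | succ N ih =>
      have hc : (c R A (N+1)) (a * b)
          = LinearMap.lTensor A (c R A N) ((Coalgebra.comul (R := R)) (a * b)) :=
        LinearMap.congr_fun (c_succ (R := R) (A := A) N) (a * b)
      have hca : (c R A (N+1)) a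
          = LinearMap.lTensor A (c R A N) ((Coalgebra.comul (R := R)) a) :=
        LinearMap.congr_fun (c_succ (R := R) (A := A) N) a
      have hcb : (c R A (N+1)) b
          = LinearMap.lTensor A (c R A N) ((Coalgebra.comul (R := R)) b) :=
        LinearMap.congr_fun (c_succ (R := R) (A := A) N) b
      rw [hc, hca, hcb, Bialgebra.comul_mul]
      have key : ∀ u v : A ⊗[R] A,
          LinearMap.lTensor A (c R A N) (u * v)
            = mulPow R A (N + 1)
                ((LinearMap.lTensor A (c R A N) u) ⊗ₜ[R] (LinearMap.lTensor A (c R A N) v)) := by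
        intro u v
        induction u with
        | zero => simp; erw [TensorProduct.zero_tmul, map_zero]; rfl
        | tmul a1 a2 =>
            induction v with
            | zero => simp; erw [TensorProduct.tmul_zero, map_zero]; rfl
            | tmul b1 b2 =>
                rw [Algebra.TensorProduct.tmul_mul_tmul]
                simp only [LinearMap.lTensor_tmul]
                rw [mulPow_tmul, ih]
            | add v1 v2 hv1 hv2 =>
                erw [mul_add, map_add, hv1, hv2, map_add, TensorProduct.tmul_add, map_add]; rfl
        | add u1 u2 hu1 hu2 =>
            erw [add_mul, map_add, hu1, hu2, map_add, TensorProduct.add_tmul, map_add]; rfl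
      exact key _ _

variable (R A) in
/-- `W N p`: the submodule of `H^{⊗N}` spanned by pure tensors with at most `p`
non-unit slots. -/
def W : (N p : ℕ) → Submodule R (Tpow R A N)
  | 0, _ => ⊤
  | N+1, 0 => Submodule.map (TensorProduct.mk R A (Tpow R A N) 1) (W N 0)
  | N+1, p+1 =>
      Submodule.map (TensorProduct.mk R A (Tpow R A N) 1) (W N (p+1))
        ⊔ LinearMap.range (LinearMap.lTensor A (W N p).subtype)

variable (R A) in
def goodSet (N p : ℕ) : Set (A ⊗[R] Tpow R A N) :=
  {x | ∃ (h : A) (w : Tpow R A N), x = h ⊗ₜ[R] w ∧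
    ((h = 1 ∧ w ∈ W R A N p) ∨ (∃ p', p' + 1 = p ∧ w ∈ W R A N p'))}

lemma W_le_span (N p : ℕ) :
    W R A (N+1) p ≤ Submodule.span R (goodSet R A N p) := by
  cases p with
  | zero =>
      rintro x ⟨w, hw, rfl⟩
      exact (Submodule.subset_span ⟨1, w, rfl, Or.inl ⟨rfl, hw⟩⟩ : _ ∈ Submodule.span R (goodSet R A N 0))
  | succ p =>
      have part2 : ∀ y : A ⊗[R] ↥(W R A N p),
          (LinearMap.lTensor A (W R A N p).subtype) y
            ∈ Submodule.span R (goodSet R A N (p + 1)) := by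
        intro y
        induction y with
        | zero => rw [_root_.map_zero]; exact Submodule.zero_mem _
        | tmul h w =>
            rw [LinearMap.lTensor_tmul]
            exact Submodule.subset_span ⟨h, w.1, rfl, Or.inr ⟨p, rfl, w.2⟩⟩
        | add y z hy hz =>
            rw [_root_.map_add]
            exact Submodule.add_mem _ hy hz
      apply sup_le
      · rintro x ⟨w, hw, rfl⟩
        exact (Submodule.subset_span ⟨1, w, rfl, Or.inl ⟨rfl, hw⟩⟩ : _ ∈ Submodule.span R (goodSet R A N (p + 1)))
      · rintro x ⟨y, rfl⟩
        exact part2 y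

lemma mapPow_mulPow_eq_zero :
    ∀ (N p q : ℕ), p + q < N → ∀ x ∈ W R A N p, ∀ y ∈ W R A N q,
      mapPow (e R A) N (mulPow R A N (x ⊗ₜ[R] y)) = 0 := by
  intro N
  induction N with
  | zero => intro p q h; omega
  | succ N ih =>
      intro p q hpq x hx y hy
      have hx' := W_le_span N p hx
      have hy' := W_le_span N q hy
      clear hx hy
      have hgen : ∀ x' ∈ goodSet R A N p, ∀ y' ∈ goodSet R A N q,
          mapPow (e R A) (N+1) (mulPow R A (N+1) (x' ⊗ₜ[R] y')) = 0 := by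
        rintro x' ⟨h, w, rfl, hcx⟩ y' ⟨h', w', rfl, hcy⟩
        rw [mulPow_tmul]
        have hmap : mapPow (e R A) (N+1) ((h * h') ⊗ₜ[R] (mulPow R A N (w ⊗ₜ[R] w')))
            = (e R A (h * h')) ⊗ₜ[R] (mapPow (e R A) N (mulPow R A N (w ⊗ₜ[R] w'))) := rfl
        rw [hmap]
        rcases hcx with ⟨rfl, hw⟩ | ⟨p', rfl, hw⟩
        · rcases hcy with ⟨rfl, hw'⟩ | ⟨q', rfl, hw'⟩
          · rw [one_mul, e_one, TensorProduct.zero_tmul]; rfl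
          · rw [ih p q' (by omega) w hw w' hw', TensorProduct.tmul_zero]; rfl
        · rcases hcy with ⟨rfl, hw'⟩ | ⟨q', rfl, hw'⟩
          · rw [ih p' q (by omega) w hw w' hw', TensorProduct.tmul_zero]; rfl
          · rw [ih p' q' (by omega) w hw w' hw', TensorProduct.tmul_zero]; rfl
      -- now extend by bilinearity
      induction hy' using Submodule.span_induction with
      | mem y0 hy0 =>
          induction hx' using Submodule.span_induction with
          | mem x0 hx0 => exact hgen x0 hx0 y0 hy0
          | zero => erw [TensorProduct.zero_tmul, map_zero]
          | add x1 x2 _ _ ih1 ih2 =>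
              erw [TensorProduct.add_tmul, map_add, map_add, ih1, ih2, add_zero]
          | smul r x1 _ ih1 =>
              erw [show (r • x1) ⊗ₜ[R] y0 = r • (x1 ⊗ₜ[R] y0) from LinearMap.map_smul₂ (TensorProduct.mk R _ _) r x1 y0, _root_.map_smul, _root_.map_smul, ih1, smul_zero]
      | zero => erw [TensorProduct.tmul_zero, map_zero]
      | add y1 y2 _ _ ih1 ih2 =>
          erw [TensorProduct.tmul_add, map_add, map_add, ih1, ih2, add_zero]
      | smul r y1 _ ih1 =>
          erw [show x ⊗ₜ[R] (r • y1) = r • (x ⊗ₜ[R] y1) from (TensorProduct.mk R _ _ x).map_smul r y1, _root_.map_smul, _root_.map_smul, ih1, smul_zero]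

lemma exists_factor {M₁ M₂ M₃ : Type u} [AddCommGroup M₁] [AddCommGroup M₂]
    [AddCommGroup M₃] [Module R M₁] [Module R M₂] [Module R M₃]
    (f : M₁ →ₗ[R] M₃) (g : M₁ →ₗ[R] M₂) (hg : Function.Surjective g)
    (hk : LinearMap.ker g ≤ LinearMap.ker f) : ∃ φ : M₂ →ₗ[R] M₃, φ ∘ₗ g = f := by
  refine ⟨(Submodule.liftQ (LinearMap.ker g) f hk) ∘ₗ
    (LinearMap.quotKerEquivOfSurjective g hg).symm.toLinearMap, ?_⟩
  ext x
  have h1 : (LinearMap.quotKerEquivOfSurjective g hg) (Submodule.Quotient.mk x) = g x := by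
    simp [LinearMap.quotKerEquivOfSurjective, LinearEquiv.trans_apply,
      LinearMap.quotKerEquivRange_apply_mk, LinearEquiv.ofTop_apply]
  have h2 : (LinearMap.quotKerEquivOfSurjective g hg).symm (g x)
      = Submodule.Quotient.mk x := by
    rw [← h1, LinearEquiv.symm_apply_apply]
  show (Submodule.liftQ (LinearMap.ker g) f hk)
      ((LinearMap.quotKerEquivOfSurjective g hg).symm (g x)) = f x
  rw [h2]
  exact Submodule.liftQ_apply _ _ _

lemma master : ∀ (N n : ℕ), ∃ h : Tpow R A (n+1) →ₗ[R] ((Tpow R A N : Type u) ⧸ W R A N n),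
    (W R A N n).mkQ ∘ₗ c R A N = h ∘ₗ d R A (n+1) := by
  intro N
  induction N with
  | zero =>
      intro n
      refine ⟨0, ?_⟩
      ext a
      show (W R A 0 n).mkQ ((c R A 0) a) = (0 : _ →ₗ[R] _) ((d R A (n+1)) a)
      rw [Submodule.mkQ_apply, LinearMap.zero_apply, Submodule.Quotient.mk_eq_zero]
      exact Submodule.mem_top
  | succ N ihN =>
      intro n
      cases n with
      | zero =>
          obtain ⟨h₀, hh₀⟩ := ihN 0
          have hker : W R A N 0 ≤ LinearMap.ker
              ((W R A (N+1) 0).mkQ ∘ₗ TensorProduct.mk R A (Tpow R A N) 1) := by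
            intro w hw
            show (W R A (N+1) 0).mkQ ((TensorProduct.mk R A (Tpow R A N) 1) w) = 0
            erw [Submodule.mkQ_apply, Submodule.Quotient.mk_eq_zero]
            show _ ∈ Submodule.map (TensorProduct.mk R A (Tpow R A N) 1) (W R A N 0)
            exact ⟨w, hw, rfl⟩
          set qbar := Submodule.liftQ (W R A N 0)
            ((W R A (N+1) 0).mkQ ∘ₗ TensorProduct.mk R A (Tpow R A N) 1) hker with hqbar
          refine ⟨(((W R A (N+1) 0).mkQ ∘ₗ (TensorProduct.map (e R A) (c R A N))
              ∘ₗ (Coalgebra.comul (R := R) (A := A))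
              ∘ₗ (TensorProduct.rid R A).toLinearMap :
                (Tpow R A (0+1) : Type u) →ₗ[R]
                  ((Tpow R A (N+1) : Type u) ⧸ W R A (N+1) 0)) + qbar ∘ₗ h₀), ?_⟩
          ext a
          have hL : (c R A (N+1)) a
              = TensorProduct.map (e R A) (c R A N) ((Coalgebra.comul (R := R)) a)
                + (TensorProduct.mk R A (Tpow R A N) 1) ((c R A N) a) :=
            LinearMap.congr_fun ((c_succ (R := R) (A := A) N).trans (comul_decomp N)) a
          show (W R A (N+1) 0).mkQ ((c R A (N+1)) a) = _
          erw [hL, _root_.map_add]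
          have hrid : (TensorProduct.rid R A).toLinearMap ((d R A 1) a) = e R A a := by
            show (TensorProduct.rid R A)
              ((TensorProduct.map (e R A) (LinearMap.id (R := R) (M := R)))
                ((TensorProduct.rid R A).symm a)) = e R A a
            rw [TensorProduct.rid_symm_apply, TensorProduct.map_tmul]
            simp
          have h2 : qbar (h₀ ((d R A 1) a))
              = (W R A (N+1) 0).mkQ
                  ((TensorProduct.mk R A (Tpow R A N) 1) ((c R A N) a)) := by
            have hq : (W R A N 0).mkQ ((c R A N) a) = h₀ ((d R A 1) a) :=
              LinearMap.congr_fun hh₀ a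
            rw [← hq]
            show qbar (Submodule.Quotient.mk ((c R A N) a)) = _
            rw [hqbar, Submodule.liftQ_apply]
            rfl
          have hone : TensorProduct.map (e R A) (c R A N)
              ((Coalgebra.comul (R := R)) (1 : A)) = 0 := by
            rw [Bialgebra.comul_one, Algebra.TensorProduct.one_def,
              TensorProduct.map_tmul, e_one, TensorProduct.zero_tmul]
          have h3 : (W R A (N+1) 0).mkQ
                (TensorProduct.map (e R A) (c R A N)
                  ((Coalgebra.comul (R := R)) (e R A a)))
              = (W R A (N+1) 0).mkQ
                (TensorProduct.map (e R A) (c R A N)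
                  ((Coalgebra.comul (R := R)) a)) := by
            have hdiff : (Coalgebra.comul (R := R)) (e R A a)
                = (Coalgebra.comul (R := R)) a
                  - (Coalgebra.counit (R := R) a) • (Coalgebra.comul (R := R)) (1 : A) := by
              have he : e R A a = a - (Coalgebra.counit (R := R) a) • (1 : A) := by
                simp [e, eAug]
              rw [he, map_sub, _root_.map_smul]
            rw [hdiff, map_sub, _root_.map_smul, hone, smul_zero, sub_zero]
          show _ = ((W R A (N+1) 0).mkQ ∘ₗ (TensorProduct.map (e R A) (c R A N))
              ∘ₗ (Coalgebra.comul (R := R) (A := A))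
              ∘ₗ (TensorProduct.rid R A).toLinearMap) ((d R A 1) a)
            + qbar (h₀ ((d R A 1) a))
          rw [h2]
          congr 1
          show _ = (W R A (N+1) 0).mkQ
            (TensorProduct.map (e R A) (c R A N)
              ((Coalgebra.comul (R := R))
                ((TensorProduct.rid R A).toLinearMap ((d R A 1) a))))
          rw [hrid, h3]
      | succ n =>
          obtain ⟨h₁, hh₁⟩ := ihN n
          obtain ⟨h₂, hh₂⟩ := ihN (n+1)
          set Q := (W R A (N+1) (n+1)).mkQ with hQ
          set g : (A ⊗[R] Tpow R A N) →ₗ[R] (A ⊗[R] ((Tpow R A N : Type u) ⧸ W R A N n))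
            := LinearMap.lTensor A (W R A N n).mkQ with hg
          have hgsurj : Function.Surjective g :=
            LinearMap.lTensor_surjective A (Submodule.mkQ_surjective _)
          have hker : LinearMap.ker g ≤ LinearMap.ker Q := by
            rw [hg, lTensor_mkQ (Q := A) (N := W R A N n), hQ, Submodule.ker_mkQ]
            exact le_sup_right
          obtain ⟨φ, hφ⟩ := exists_factor (f := Q) (g := g) hgsurj hker
          have hker2 : W R A N (n+1) ≤ LinearMap.ker
              (Q ∘ₗ TensorProduct.mk R A (Tpow R A N) 1) := by
            intro w hw
            show Q ((TensorProduct.mk R A (Tpow R A N) 1) w) = 0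
            erw [hQ, Submodule.mkQ_apply, Submodule.Quotient.mk_eq_zero]
            refine le_sup_left (α := Submodule R (A ⊗[R] Tpow R A N)) ?_
            show _ ∈ Submodule.map (TensorProduct.mk R A (Tpow R A N) 1) (W R A N (n+1))
            exact ⟨w, hw, rfl⟩
          set qbar := Submodule.liftQ (W R A N (n+1))
            (Q ∘ₗ TensorProduct.mk R A (Tpow R A N) 1) hker2 with hqbar
          refine ⟨((φ ∘ₗ (LinearMap.lTensor A h₁) :
              (Tpow R A (n+1+1) : Type u) →ₗ[R]
                ((Tpow R A (N+1) : Type u) ⧸ W R A (N+1) (n+1)))) + qbar ∘ₗ h₂, ?_⟩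
          ext a
          have hL : (c R A (N+1)) a
              = TensorProduct.map (e R A) (c R A N) ((Coalgebra.comul (R := R)) a)
                + (TensorProduct.mk R A (Tpow R A N) 1) ((c R A N) a) :=
            LinearMap.congr_fun ((c_succ (R := R) (A := A) N).trans (comul_decomp N)) a
          show Q ((c R A (N+1)) a) = _
          erw [hL, _root_.map_add]
          have piece1 : ∀ u : A ⊗[R] A,
              Q (TensorProduct.map (e R A) (c R A N) u)
                = φ ((LinearMap.lTensor A h₁)
                    (TensorProduct.map (e R A) (d R A (n+1)) u)) := by
            intro u
            induction u with
            | zero => erw [_root_.map_zero, _root_.map_zero]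
            | tmul x y =>
                rw [TensorProduct.map_tmul, TensorProduct.map_tmul,
                  LinearMap.lTensor_tmul]
                have hq : Q ((e R A x) ⊗ₜ[R] ((c R A N) y))
                    = φ (g ((e R A x) ⊗ₜ[R] ((c R A N) y))) :=
                  (LinearMap.congr_fun hφ _).symm
                rw [hq, hg, LinearMap.lTensor_tmul]
                have hy : (W R A N n).mkQ ((c R A N) y) = h₁ ((d R A (n+1)) y) :=
                  LinearMap.congr_fun hh₁ y
                rw [hy]
            | add u v hu hv =>
                erw [_root_.map_add, _root_.map_add, _root_.map_add, _root_.map_add,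
                  _root_.map_add, hu, hv]
          have piece2 : qbar (h₂ ((d R A (n+1+1)) a))
              = Q ((TensorProduct.mk R A (Tpow R A N) 1) ((c R A N) a)) := by
            have hq : (W R A N (n+1)).mkQ ((c R A N) a) = h₂ ((d R A (n+1+1)) a) :=
              LinearMap.congr_fun hh₂ a
            rw [← hq]
            show qbar (Submodule.Quotient.mk ((c R A N) a)) = _
            rw [hqbar, Submodule.liftQ_apply]
            rfl
          have hd : (d R A (n+1+1)) a
              = TensorProduct.map (e R A) (d R A (n+1)) ((Coalgebra.comul (R := R)) a) :=
            LinearMap.congr_fun (d_succ (R := R) (A := A) (n+1)) a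
          show _ = φ ((LinearMap.lTensor A h₁) ((d R A (n+1+1)) a))
            + qbar (h₂ ((d R A (n+1+1)) a))
          rw [piece2, hd, ← piece1 ((Coalgebra.comul (R := R)) a)]

lemma c_mem_W {N n : ℕ} {a : A} (hc : d R A (n+1) a = 0) :
    c R A N a ∈ W R A N n := by
  obtain ⟨h, hh⟩ := master (R := R) (A := A) N n
  have h1 : (W R A N n).mkQ ((c R A N) a) = h ((d R A (n+1)) a) :=
    LinearMap.congr_fun hh a
  rw [hc, _root_.map_zero] at h1
  have h2 : Submodule.Quotient.mk ((c R A N) a)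
      = (0 : (Tpow R A N : Type u) ⧸ W R A N n) := h1
  exact (Submodule.Quotient.mk_eq_zero _).mp h2

end CoradAux

open CoradAux in
/-- For a bialgebra `H` (viewed as a coaugmented coalgebra via its unit),
if `a ∈ P_n(H)` and `b ∈ P_m(H)`, then `a * b ∈ P_{n+m}(H)`. -/
theorem stmt4 {R : Type u} [CommRing R] {H : Type u} [Ring H] [Bialgebra R H]
    (n m : ℕ) (a b : H)
    (ha : a ∈ corad (Coalgebra.comul (R := R) (A := H))
      (Coalgebra.counit (R := R) (A := H)) (1 : H) n)
    (hb : b ∈ corad (Coalgebra.comul (R := R) (A := H))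
      (Coalgebra.counit (R := R) (A := H)) (1 : H) m) :
    a * b ∈ corad (Coalgebra.comul (R := R) (A := H))
      (Coalgebra.counit (R := R) (A := H)) (1 : H) (n + m) := by
  have ha' : d R H (n+1) a = 0 := ha
  have hb' : d R H (m+1) b = 0 := hb
  show deltaPow (Coalgebra.comul (R := R) (A := H))
      (Coalgebra.counit (R := R) (A := H)) (1 : H) (n + m + 1) (a * b) = 0
  have h1 : deltaPow (Coalgebra.comul (R := R) (A := H))
      (Coalgebra.counit (R := R) (A := H)) (1 : H) (n + m + 1) (a * b)
      = mapPow (e R H) (n + m + 1) ((c R H (n + m + 1)) (a * b)) := rfl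
  rw [h1, c_mul]
  exact mapPow_mulPow_eq_zero (n + m + 1) n m (by omega)
    _ (c_mem_W ha') _ (c_mem_W hb')
end
end

section
/- Let k be a field and H a coaugmented coalgebra over k. For every n ∈ ℕ, the subspace P_n(H) is a subcoalgebra of H containing 1_H: one has Δ(P_n(H)) ⊆ P_n(H) ⊗ P_n(H) (that is, Δ maps P_n(H) into the image of the canonical map P_n(H) ⊗ P_n(H) → H ⊗ H), 1_H ∈ P_n(H), so P_n(H) is itself a coaugmented coalgebra with the restricted structure maps. -/
open TensorProduct

noncomputable section

universe u

variable (R : Type u) [CommRing R]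

variable {R}
variable {H : Type u} [AddCommGroup H] [Module R H]

-- shift equivalence Tpow n ⊗ H ≃ Tpow (n+1)
def Tshift : (n : ℕ) → ((Tpow R H n : Type u) ⊗[R] H ≃ₗ[R] (Tpow R H (n+1) : Type u))
  | 0 => TensorProduct.comm R R H
  | n + 1 =>
      (TensorProduct.assoc R H (Tpow R H n : Type u) H) ≪≫ₗ
        TensorProduct.congr (LinearEquiv.refl R H) (Tshift n)

open LinearMap

lemma Tshift_mapPow (e : H →ₗ[R] H) : (n : ℕ) →
    (mapPow e (n+1)) ∘ₗ (Tshift (R := R) (H := H) n).toLinearMap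
      = (Tshift n).toLinearMap ∘ₗ TensorProduct.map (mapPow e n) e
  | 0 => by
      apply TensorProduct.ext'
      intro r h
      rfl
  | n + 1 => by
      apply TensorProduct.ext_threefold
      intro a t h
      have IH := DFunLike.congr_fun (Tshift_mapPow e n) (t ⊗ₜ[R] h)
      simp only [LinearMap.comp_apply, LinearEquiv.coe_coe] at IH
      show TensorProduct.map e (mapPow e (n+1))
          ((TensorProduct.congr (LinearEquiv.refl R H) (Tshift n))
            ((TensorProduct.assoc R H (Tpow R H n : Type u) H) ((a ⊗ₜ[R] t) ⊗ₜ[R] h)))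
        = (TensorProduct.congr (LinearEquiv.refl R H) (Tshift n))
            ((TensorProduct.assoc R H (Tpow R H n : Type u) H)
              ((TensorProduct.map (TensorProduct.map e (mapPow e n)) e) ((a ⊗ₜ[R] t) ⊗ₜ[R] h)))
      simp only [TensorProduct.assoc_tmul, TensorProduct.congr_tmul, TensorProduct.map_tmul,
        LinearEquiv.refl_apply]
      simp only [mapPow, TensorProduct.map_tmul] at IH
      simp only [mapPow]
      rw [IH]

lemma Tshift_assoc_aux (n : ℕ) (y : H ⊗[R] H) (t : (Tpow R H n : Type u)) (h : H) :
    (TensorProduct.assoc R H H ((Tpow R H (n+1) : Type u)))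
        (y ⊗ₜ[R] ((Tshift (R := R) (H := H) n) (t ⊗ₜ[R] h)))
      = (Tshift (n+2)) (((TensorProduct.assoc R H H (Tpow R H n : Type u)) (y ⊗ₜ[R] t)) ⊗ₜ[R] h) := by
  induction y using TensorProduct.induction_on with
  | zero =>
    simp
    exact (map_zero (Tshift (R := R) (H := H) (n+2))).symm.trans
      (congrArg _ (TensorProduct.zero_tmul _ h).symm)
  | tmul b c => rfl
  | add y z hy hz =>
    simp only [TensorProduct.add_tmul, map_add, hy, hz]
    exact (map_add _ _ _).symm.trans (congrArg _ (TensorProduct.add_tmul _ _ h).symm)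

lemma Tshift_assoc (f : H →ₗ[R] H ⊗[R] H) (n : ℕ) :
    (TensorProduct.assoc R H H (Tpow R H (n+1) : Type u)).toLinearMap
        ∘ₗ f.rTensor (Tpow R H (n+1) : Type u)
        ∘ₗ (Tshift (R := R) (H := H) (n+1)).toLinearMap
      = (Tshift (n+2)).toLinearMap
        ∘ₗ ((TensorProduct.assoc R H H (Tpow R H n : Type u)).toLinearMap
            ∘ₗ f.rTensor (Tpow R H n : Type u)).rTensor H := by
  apply TensorProduct.ext_threefold
  intro a t h
  exact Tshift_assoc_aux n (f a) t h

lemma iterComul_right (Δc : H →ₗ[R] H ⊗[R] H) (εc : H →ₗ[R] R) : (n : ℕ) →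
    iterComul Δc εc (n+2)
      = (Tshift (R := R) (H := H) (n+1)).toLinearMap
          ∘ₗ (iterComul Δc εc (n+1)).rTensor H ∘ₗ Δc
  | 0 => by
      ext x
      show (TensorProduct.assoc R H H R)
          ((Δc.rTensor R) ((TensorProduct.rid R H).symm x))
        = (Tshift 1) (((TensorProduct.rid R H).symm.toLinearMap.rTensor H) (Δc x))
      rw [TensorProduct.rid_symm_apply, LinearMap.rTensor_tmul]
      induction Δc x using TensorProduct.induction_on with
      | zero =>
        simp
        exact (map_zero _).symm
      | tmul b c => rfl
      | add y z hy hz =>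
        simp only [TensorProduct.add_tmul, map_add, hy, hz]
        exact (map_add _ _ _).symm
  | n + 1 => by
      show (TensorProduct.assoc R H H (Tpow R H (n+1) : Type u)).toLinearMap
          ∘ₗ (Δc.rTensor (Tpow R H (n+1) : Type u))
          ∘ₗ (iterComul Δc εc (n + 2)) = _
      rw [iterComul_right Δc εc n]
      erw [show (TensorProduct.assoc R H H (Tpow R H (n+1) : Type u)).toLinearMap
            ∘ₗ (Δc.rTensor (Tpow R H (n+1) : Type u))
            ∘ₗ ((Tshift (R := R) (H := H) (n+1)).toLinearMap
              ∘ₗ (iterComul Δc εc (n+1)).rTensor H ∘ₗ Δc)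
          = ((TensorProduct.assoc R H H (Tpow R H (n+1) : Type u)).toLinearMap
            ∘ₗ (Δc.rTensor (Tpow R H (n+1) : Type u))
            ∘ₗ (Tshift (R := R) (H := H) (n+1)).toLinearMap)
            ∘ₗ (iterComul Δc εc (n+1)).rTensor H ∘ₗ Δc from by
        rfl]
      rw [Tshift_assoc]
      rw [← iterComul_right Δc εc n]
      rw [show iterComul Δc εc (n+2)
          = ((TensorProduct.assoc R H H (Tpow R H n : Type u)).toLinearMap
              ∘ₗ (Δc.rTensor (Tpow R H n : Type u))) ∘ₗ iterComul Δc εc (n+1) from rfl,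
        LinearMap.rTensor_comp]
      exact congrArg (fun F => (Tshift (R := R) (H := H) (n+2)).toLinearMap ∘ₗ F ∘ₗ Δc)
        ((LinearMap.rTensor_comp (M := H)
            (g := (TensorProduct.assoc R H H (Tpow R H n : Type u)).toLinearMap
              ∘ₗ Δc.rTensor (Tpow R H n : Type u)) (f := iterComul Δc εc (n+1))).trans
          (congrArg (· ∘ₗ (iterComul Δc εc (n+1)).rTensor H)
            (LinearMap.rTensor_comp (M := H)
              (g := (TensorProduct.assoc R H H (Tpow R H n : Type u)).toLinearMap)
              (f := Δc.rTensor (Tpow R H n : Type u))))).symm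

lemma iterComul_left (Δc : H →ₗ[R] H ⊗[R] H) (εc : H →ₗ[R] R)
    (hco : (TensorProduct.assoc R H H H).toLinearMap ∘ₗ Δc.rTensor H ∘ₗ Δc
      = Δc.lTensor H ∘ₗ Δc) : (n : ℕ) →
    iterComul Δc εc (n+2) = (iterComul Δc εc (n+1)).lTensor H ∘ₗ Δc
  | 0 => by
      ext x
      show (TensorProduct.assoc R H H R)
          ((Δc.rTensor R) ((TensorProduct.rid R H).symm x))
        = ((TensorProduct.rid R H).symm.toLinearMap.lTensor H) (Δc x)
      rw [TensorProduct.rid_symm_apply, LinearMap.rTensor_tmul]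
      induction Δc x using TensorProduct.induction_on with
      | zero => simp
      | tmul b c => rfl
      | add y z hy hz => simp only [TensorProduct.add_tmul, map_add, hy, hz]
  | n + 1 => by
      have IH := iterComul_left Δc εc hco n
      have E : (TensorProduct.assoc R H H (Tpow R H (n+1) : Type u)).toLinearMap
            ∘ₗ (iterComul Δc εc (n+1)).lTensor (H ⊗[R] H)
          = ((iterComul Δc εc (n+1)).lTensor H).lTensor H
            ∘ₗ (TensorProduct.assoc R H H H).toLinearMap := by
        have := TensorProduct.map_map_comp_assoc_eq (LinearMap.id (R := R) (M := H))
          (LinearMap.id (R := R) (M := H)) (iterComul Δc εc (n+1))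
        rw [TensorProduct.map_id] at this
        exact this.symm
      calc (id (iterComul Δc εc (n+3)) : H →ₗ[R] H ⊗[R] (H ⊗[R] (Tpow R H (n+1) : Type u)))
          = (TensorProduct.assoc R H H (Tpow R H (n+1) : Type u)).toLinearMap
              ∘ₗ Δc.rTensor (Tpow R H (n+1) : Type u)
              ∘ₗ iterComul Δc εc (n+2) := rfl
        _ = (TensorProduct.assoc R H H (Tpow R H (n+1) : Type u)).toLinearMap
              ∘ₗ (Δc.rTensor (Tpow R H (n+1) : Type u)
                ∘ₗ (iterComul Δc εc (n+1)).lTensor H) ∘ₗ Δc := by rw [IH]; exact rfl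
        _ = (TensorProduct.assoc R H H (Tpow R H (n+1) : Type u)).toLinearMap
              ∘ₗ ((iterComul Δc εc (n+1)).lTensor (H ⊗[R] H)
                ∘ₗ Δc.rTensor H) ∘ₗ Δc := by
              rw [LinearMap.rTensor_comp_lTensor, LinearMap.lTensor_comp_rTensor]
        _ = ((TensorProduct.assoc R H H (Tpow R H (n+1) : Type u)).toLinearMap
              ∘ₗ (iterComul Δc εc (n+1)).lTensor (H ⊗[R] H))
                ∘ₗ Δc.rTensor H ∘ₗ Δc := rfl
        _ = (((iterComul Δc εc (n+1)).lTensor H).lTensor H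
              ∘ₗ (TensorProduct.assoc R H H H).toLinearMap)
                ∘ₗ Δc.rTensor H ∘ₗ Δc := by rw [E]
        _ = ((iterComul Δc εc (n+1)).lTensor H).lTensor H
              ∘ₗ ((TensorProduct.assoc R H H H).toLinearMap
                ∘ₗ Δc.rTensor H ∘ₗ Δc) := rfl
        _ = ((iterComul Δc εc (n+1)).lTensor H).lTensor H
              ∘ₗ (Δc.lTensor H ∘ₗ Δc) := by rw [hco]
        _ = ((iterComul Δc εc (n+1)).lTensor H ∘ₗ Δc).lTensor H ∘ₗ Δc := by
              rw [LinearMap.lTensor_comp, LinearMap.comp_assoc]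
        _ = (id ((iterComul Δc εc (n+2)).lTensor H ∘ₗ Δc) :
              H →ₗ[R] H ⊗[R] (H ⊗[R] (Tpow R H (n+1) : Type u))) := by rw [← IH]; rfl

lemma deltaPow_left (Δc : H →ₗ[R] H ⊗[R] H) (εc : H →ₗ[R] R) (u : H)
    (hco : (TensorProduct.assoc R H H H).toLinearMap ∘ₗ Δc.rTensor H ∘ₗ Δc
      = Δc.lTensor H ∘ₗ Δc) (n : ℕ) :
    deltaPow Δc εc u (n+2)
      = TensorProduct.map (eAug εc u) (deltaPow Δc εc u (n+1)) ∘ₗ Δc := by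
  calc (id (deltaPow Δc εc u (n+2)) : H →ₗ[R] H ⊗[R] (Tpow R H (n+1) : Type u))
      = TensorProduct.map (eAug εc u) (mapPow (eAug εc u) (n+1))
          ∘ₗ iterComul Δc εc (n+2) := rfl
    _ = TensorProduct.map (eAug εc u) (mapPow (eAug εc u) (n+1))
          ∘ₗ ((iterComul Δc εc (n+1)).lTensor H ∘ₗ Δc) := by
        rw [iterComul_left Δc εc hco n]
    _ = (TensorProduct.map (eAug εc u) (mapPow (eAug εc u) (n+1))
          ∘ₗ TensorProduct.map LinearMap.id (iterComul Δc εc (n+1))) ∘ₗ Δc := rfl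
    _ = TensorProduct.map (eAug εc u) (deltaPow Δc εc u (n+1)) ∘ₗ Δc := by
        rw [← TensorProduct.map_comp, LinearMap.comp_id]
        rfl

lemma deltaPow_right (Δc : H →ₗ[R] H ⊗[R] H) (εc : H →ₗ[R] R) (u : H) (n : ℕ) :
    deltaPow Δc εc u (n+2)
      = (Tshift (R := R) (H := H) (n+1)).toLinearMap
          ∘ₗ TensorProduct.map (deltaPow Δc εc u (n+1)) (eAug εc u) ∘ₗ Δc := by
  calc deltaPow Δc εc u (n+2)
      = mapPow (eAug εc u) (n+2) ∘ₗ iterComul Δc εc (n+2) := rfl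
    _ = mapPow (eAug εc u) (n+2)
          ∘ₗ ((Tshift (n+1)).toLinearMap ∘ₗ (iterComul Δc εc (n+1)).rTensor H ∘ₗ Δc) := by
        rw [iterComul_right Δc εc n]
    _ = (mapPow (eAug εc u) (n+2) ∘ₗ (Tshift (n+1)).toLinearMap)
          ∘ₗ (iterComul Δc εc (n+1)).rTensor H ∘ₗ Δc := rfl
    _ = ((Tshift (n+1)).toLinearMap
          ∘ₗ TensorProduct.map (mapPow (eAug εc u) (n+1)) (eAug εc u))
          ∘ₗ (iterComul Δc εc (n+1)).rTensor H ∘ₗ Δc := by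
        rw [Tshift_mapPow (eAug εc u) (n+1)]
    _ = (Tshift (n+1)).toLinearMap
          ∘ₗ (TensorProduct.map (mapPow (eAug εc u) (n+1)) (eAug εc u)
            ∘ₗ TensorProduct.map (iterComul Δc εc (n+1)) LinearMap.id) ∘ₗ Δc := rfl
    _ = (Tshift (n+1)).toLinearMap
          ∘ₗ TensorProduct.map (deltaPow Δc εc u (n+1)) (eAug εc u) ∘ₗ Δc := by
        rw [← TensorProduct.map_comp, LinearMap.comp_id]
        rfl

lemma deltaPow_mono (Δc : H →ₗ[R] H ⊗[R] H) (εc : H →ₗ[R] R) (u : H)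
    (hge : (TensorProduct.map (eAug εc u) (eAug εc u) ∘ₗ Δc) ∘ₗ (eAug εc u)
      = TensorProduct.map (eAug εc u) (eAug εc u) ∘ₗ Δc) (n : ℕ) :
    deltaPow Δc εc u (n+2)
      = (TensorProduct.assoc R H H (Tpow R H n : Type u)).toLinearMap
          ∘ₗ (TensorProduct.map (eAug εc u) (eAug εc u) ∘ₗ Δc).rTensor (Tpow R H n : Type u)
          ∘ₗ deltaPow Δc εc u (n+1) := by
  calc (id (deltaPow Δc εc u (n+2)) : H →ₗ[R] H ⊗[R] (H ⊗[R] (Tpow R H n : Type u)))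
      = (TensorProduct.map (eAug εc u) (TensorProduct.map (eAug εc u) (mapPow (eAug εc u) n))
          ∘ₗ (TensorProduct.assoc R H H (Tpow R H n : Type u)).toLinearMap)
          ∘ₗ Δc.rTensor (Tpow R H n : Type u) ∘ₗ iterComul Δc εc (n+1) := rfl
    _ = ((TensorProduct.assoc R H H (Tpow R H n : Type u)).toLinearMap
          ∘ₗ TensorProduct.map (TensorProduct.map (eAug εc u) (eAug εc u)) (mapPow (eAug εc u) n))
          ∘ₗ Δc.rTensor (Tpow R H n : Type u) ∘ₗ iterComul Δc εc (n+1) := by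
        rw [TensorProduct.map_map_comp_assoc_eq]
    _ = (TensorProduct.assoc R H H (Tpow R H n : Type u)).toLinearMap
          ∘ₗ (TensorProduct.map (TensorProduct.map (eAug εc u) (eAug εc u)) (mapPow (eAug εc u) n)
            ∘ₗ TensorProduct.map Δc LinearMap.id)
          ∘ₗ iterComul Δc εc (n+1) := rfl
    _ = (TensorProduct.assoc R H H (Tpow R H n : Type u)).toLinearMap
          ∘ₗ TensorProduct.map ((TensorProduct.map (eAug εc u) (eAug εc u) ∘ₗ Δc) ∘ₗ (eAug εc u))
              (LinearMap.id ∘ₗ mapPow (eAug εc u) n)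
          ∘ₗ iterComul Δc εc (n+1) := by
        rw [← TensorProduct.map_comp, LinearMap.comp_id, LinearMap.id_comp, hge]
    _ = (TensorProduct.assoc R H H (Tpow R H n : Type u)).toLinearMap
          ∘ₗ (TensorProduct.map (TensorProduct.map (eAug εc u) (eAug εc u) ∘ₗ Δc) LinearMap.id
            ∘ₗ TensorProduct.map (eAug εc u) (mapPow (eAug εc u) n))
          ∘ₗ iterComul Δc εc (n+1) := by
        rw [← TensorProduct.map_comp]
    _ = (TensorProduct.assoc R H H (Tpow R H n : Type u)).toLinearMap
          ∘ₗ (TensorProduct.map (eAug εc u) (eAug εc u) ∘ₗ Δc).rTensor (Tpow R H n : Type u)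
          ∘ₗ deltaPow Δc εc u (n+1) := rfl

lemma deltaPow_u (Δc : H →ₗ[R] H ⊗[R] H) (εc : H →ₗ[R] R) (u : H)
    (hco : (TensorProduct.assoc R H H H).toLinearMap ∘ₗ Δc.rTensor H ∘ₗ Δc
      = Δc.lTensor H ∘ₗ Δc)
    (heu : eAug εc u u = 0) (hΔu : Δc u = u ⊗ₜ[R] u) : ∀ n, deltaPow Δc εc u (n+1) u = 0
  | 0 => by
      show TensorProduct.map (eAug εc u) LinearMap.id ((TensorProduct.rid R H).symm u) = 0
      rw [TensorProduct.rid_symm_apply, TensorProduct.map_tmul, heu, TensorProduct.zero_tmul]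
  | n+1 => by
      have h2 : TensorProduct.map (eAug εc u) (deltaPow Δc εc u (n+1)) (Δc u) = 0 := by
        rw [hΔu, TensorProduct.map_tmul, heu, TensorProduct.zero_tmul]
      calc (id (deltaPow Δc εc u (n+2) u) : H ⊗[R] (Tpow R H (n+1) : Type u))
          = TensorProduct.map (eAug εc u) (deltaPow Δc εc u (n+1)) (Δc u) :=
            DFunLike.congr_fun (deltaPow_left Δc εc u hco n) u
        _ = 0 := h2


/-- Over a field, `P_n(H)` is a subcoalgebra of `H` containing the coaugmentation `1_H`. -/
theorem stmt6 {k : Type u} [Field k] {H : Type u} [AddCommGroup H] [Module k H]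
    [Coalgebra k H] (u : H)
    (hεu : Coalgebra.counit (R := k) (A := H) u = 1)
    (hΔu : Coalgebra.comul (R := k) (A := H) u = u ⊗ₜ[k] u) (n : ℕ) :
    u ∈ corad (Coalgebra.comul (R := k) (A := H)) (Coalgebra.counit (R := k) (A := H)) u n ∧
    ∀ x ∈ corad (Coalgebra.comul (R := k) (A := H)) (Coalgebra.counit (R := k) (A := H)) u n,
      Coalgebra.comul (R := k) (A := H) x ∈
        LinearMap.range (TensorProduct.map
          (corad (Coalgebra.comul (R := k) (A := H))
            (Coalgebra.counit (R := k) (A := H)) u n).subtype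
          (corad (Coalgebra.comul (R := k) (A := H))
            (Coalgebra.counit (R := k) (A := H)) u n).subtype) := by
  classical
  set Δc := Coalgebra.comul (R := k) (A := H) with hΔc
  set εc := Coalgebra.counit (R := k) (A := H) with hεc
  have hco : (TensorProduct.assoc k H H H).toLinearMap ∘ₗ Δc.rTensor H ∘ₗ Δc
      = Δc.lTensor H ∘ₗ Δc := Coalgebra.coassoc
  have heu : eAug εc u u = 0 := by
    show u - εc u • u = 0
    rw [show εc u = 1 from hεu, one_smul, sub_self]
  have hge : (TensorProduct.map (eAug εc u) (eAug εc u) ∘ₗ Δc) ∘ₗ (eAug εc u)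
      = TensorProduct.map (eAug εc u) (eAug εc u) ∘ₗ Δc := by
    ext x
    show TensorProduct.map (eAug εc u) (eAug εc u) (Δc (eAug εc u x))
      = TensorProduct.map (eAug εc u) (eAug εc u) (Δc x)
    have hex : eAug εc u x = x - εc x • u := rfl
    rw [hex, map_sub, map_smul, map_sub, map_smul, hΔu, TensorProduct.map_tmul, heu,
      TensorProduct.zero_tmul, smul_zero, sub_zero]
  refine ⟨LinearMap.mem_ker.mpr (deltaPow_u Δc εc u hco heu hΔu n), ?_⟩
  intro x hx
  set P := corad Δc εc u n with hP
  set δ := deltaPow Δc εc u (n+1) with hδ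
  have hx0 : δ x = 0 := hx
  have hmono : deltaPow Δc εc u (n+2) x = 0 := by
    calc (id (deltaPow Δc εc u (n+2) x) : H ⊗[k] (H ⊗[k] (Tpow k H n : Type u)))
        = (TensorProduct.assoc k H H (Tpow k H n : Type u))
            (((TensorProduct.map (eAug εc u) (eAug εc u) ∘ₗ Δc).rTensor
              (Tpow k H n : Type u)) (δ x)) :=
          DFunLike.congr_fun (deltaPow_mono Δc εc u hge n) x
      _ = 0 := by
        rw [hx0]
        exact (congrArg _ (map_zero (LinearMap.rTensor (Tpow k H n : Type u)
          (TensorProduct.map (eAug εc u) (eAug εc u) ∘ₗ Δc)))).trans (map_zero _)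
  have hA : (δ.lTensor H) (Δc x) = 0 := by
    have h1 : TensorProduct.map (eAug εc u) δ (Δc x) = 0 :=
      (DFunLike.congr_fun (deltaPow_left Δc εc u hco n) x).symm.trans hmono
    have h3 : (εc.rTensor (Tpow k H (n+1) : Type u)) ((δ.lTensor H) (Δc x)) = 0 := by
      have e3 : εc.rTensor (Tpow k H (n+1) : Type u) ∘ₗ δ.lTensor H
          = δ.lTensor k ∘ₗ εc.rTensor H := by
        rw [LinearMap.rTensor_comp_lTensor, LinearMap.lTensor_comp_rTensor]
      have h4 := DFunLike.congr_fun e3 (Δc x)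
      simp only [LinearMap.comp_apply] at h4
      rw [h4, Coalgebra.rTensor_counit_comul, LinearMap.lTensor_tmul, hx0,
        TensorProduct.tmul_zero]
    have h2 : TensorProduct.map (eAug εc u) δ (Δc x)
        = (δ.lTensor H) (Δc x)
          - ((LinearMap.toSpanSingleton k H u).rTensor (Tpow k H (n+1) : Type u))
              ((εc.rTensor (Tpow k H (n+1) : Type u)) ((δ.lTensor H) (Δc x))) := by
      have e1 : TensorProduct.map (eAug εc u) δ
          = (eAug εc u).rTensor (Tpow k H (n+1) : Type u) ∘ₗ δ.lTensor H :=
        (LinearMap.rTensor_comp_lTensor (f := eAug εc u) (g := δ)).symm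
      have e2 : (eAug εc u).rTensor (Tpow k H (n+1) : Type u)
          = LinearMap.id - (LinearMap.toSpanSingleton k H u).rTensor
              (Tpow k H (n+1) : Type u) ∘ₗ εc.rTensor (Tpow k H (n+1) : Type u) := by
        rw [eAug, LinearMap.rTensor_sub, LinearMap.rTensor_id, LinearMap.rTensor_comp]
      have h5 := DFunLike.congr_fun e1 (Δc x)
      simp only [LinearMap.comp_apply] at h5
      rw [h5, e2]
      simp only [LinearMap.sub_apply, LinearMap.id_apply, LinearMap.comp_apply]
    rw [h2, h3, map_zero, sub_zero] at h1
    exact h1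
  have hB : (δ.rTensor H) (Δc x) = 0 := by
    have h0 : deltaPow Δc εc u (n+2) x
        = (Tshift (n+1)) (TensorProduct.map δ (eAug εc u) (Δc x)) :=
      DFunLike.congr_fun (deltaPow_right Δc εc u n) x
    have h1 : TensorProduct.map δ (eAug εc u) (Δc x) = 0 :=
      (LinearEquiv.map_eq_zero_iff _).mp (h0.symm.trans hmono)
    have h3 : (εc.lTensor (Tpow k H (n+1) : Type u)) ((δ.rTensor H) (Δc x)) = 0 := by
      have e3 : εc.lTensor (Tpow k H (n+1) : Type u) ∘ₗ δ.rTensor H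
          = δ.rTensor k ∘ₗ εc.lTensor H := by
        rw [LinearMap.lTensor_comp_rTensor, LinearMap.rTensor_comp_lTensor]
      have h4 := DFunLike.congr_fun e3 (Δc x)
      simp only [LinearMap.comp_apply] at h4
      rw [h4, Coalgebra.lTensor_counit_comul, LinearMap.rTensor_tmul, hx0,
        TensorProduct.zero_tmul]
    have h2 : TensorProduct.map δ (eAug εc u) (Δc x)
        = (δ.rTensor H) (Δc x)
          - ((LinearMap.toSpanSingleton k H u).lTensor (Tpow k H (n+1) : Type u))
              ((εc.lTensor (Tpow k H (n+1) : Type u)) ((δ.rTensor H) (Δc x))) := by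
      have e1 : TensorProduct.map δ (eAug εc u)
          = (eAug εc u).lTensor (Tpow k H (n+1) : Type u) ∘ₗ δ.rTensor H :=
        (LinearMap.lTensor_comp_rTensor (f := δ) (g := eAug εc u)).symm
      have e2 : (eAug εc u).lTensor (Tpow k H (n+1) : Type u)
          = LinearMap.id - (LinearMap.toSpanSingleton k H u).lTensor
              (Tpow k H (n+1) : Type u) ∘ₗ εc.lTensor (Tpow k H (n+1) : Type u) := by
        rw [eAug, LinearMap.lTensor_sub, LinearMap.lTensor_id, LinearMap.lTensor_comp]
      have h5 := DFunLike.congr_fun e1 (Δc x)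
      simp only [LinearMap.comp_apply] at h5
      rw [h5, e2]
      simp only [LinearMap.sub_apply, LinearMap.id_apply, LinearMap.comp_apply]
    rw [h2, h3, map_zero, sub_zero] at h1
    exact h1
  have hexP : Function.Exact (P.subtype) δ := LinearMap.exact_subtype_ker_map δ
  have ex1 : Function.Exact ((P.subtype).rTensor H) (δ.rTensor H) :=
    Module.Flat.rTensor_exact H hexP
  obtain ⟨z, hz⟩ := (ex1 (Δc x)).mp hB
  have hz2 : (δ.lTensor (↥P)) z = 0 := by
    have inj : Function.Injective ((P.subtype).rTensor (Tpow k H (n+1) : Type u)) :=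
      Module.Flat.rTensor_preserves_injective_linearMap _ P.injective_subtype
    apply inj
    have comm : (P.subtype).rTensor (Tpow k H (n+1) : Type u) ∘ₗ δ.lTensor (↥P)
        = δ.lTensor H ∘ₗ (P.subtype).rTensor H := by
      rw [LinearMap.rTensor_comp_lTensor, LinearMap.lTensor_comp_rTensor]
    have h6 := DFunLike.congr_fun comm z
    simp only [LinearMap.comp_apply] at h6
    rw [h6, hz, hA, map_zero]
  have ex2 : Function.Exact ((P.subtype).lTensor (↥P)) (δ.lTensor (↥P)) :=
    Module.Flat.lTensor_exact (↥P) hexP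
  obtain ⟨w, hw⟩ := (ex2 z).mp hz2
  refine ⟨w, ?_⟩
  have comm2 : TensorProduct.map P.subtype P.subtype
      = (P.subtype).rTensor H ∘ₗ (P.subtype).lTensor (↥P) :=
    (LinearMap.rTensor_comp_lTensor (f := P.subtype) (g := P.subtype)).symm
  have h7 := DFunLike.congr_fun comm2 w
  simp only [LinearMap.comp_apply] at h7
  rw [h7, hw, hz]
end
end

section
/- Let p be a prime and let m, r ∈ ℕ with r ≥ 1. The following are equivalent: (i) there exist positive integers k_1, k_2, …, k_r with m = k_1 + k_2 + ⋯ + k_r such that the multinomial coefficient m! / (k_1! k_2! ⋯ k_r!) is coprime to p; (ii) r ≤ L_p(m), where L_p(m) denotes the sum of the digits of m in base p. -/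
open Nat Finset

private lemma digitsum_pos {p : ℕ} (hp : 1 < p) : ∀ n, 0 < n → 0 < (p.digits n).sum := by
  intro n
  induction n using Nat.strong_induction_on with
  | _ n ih =>
    intro hn
    rw [Nat.digits_def' hp hn, List.sum_cons]
    rcases Nat.eq_zero_or_pos (n % p) with h | h
    · have hdvd : p ∣ n := Nat.dvd_of_mod_eq_zero h
      have h1 : 0 < n / p := Nat.div_pos (Nat.le_of_dvd hn hdvd) (by omega)
      have h2 : n / p < n := Nat.div_lt_self hn hp
      have := ih _ h2 h1
      omega
    · omega

private lemma split_digit {p : ℕ} (hp : 1 < p) : ∀ m, 0 < m →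
    ∃ a, 0 < a ∧ a ≤ m ∧ (p.digits a).sum = 1 ∧
      (p.digits (m - a)).sum + 1 = (p.digits m).sum := by
  intro m
  induction m using Nat.strong_induction_on with
  | _ m ih =>
    intro hm
    have hps : 0 < p := by omega
    rcases Nat.eq_zero_or_pos (m % p) with h | h
    · -- p ∣ m, recurse on m / p
      have hdvd : p ∣ m := Nat.dvd_of_mod_eq_zero h
      have h1 : 0 < m / p := Nat.div_pos (Nat.le_of_dvd hm hdvd) hps
      have h2 : m / p < m := Nat.div_lt_self hm hp
      obtain ⟨a', ha'0, ha'le, ha'L, ha'⟩ := ih _ h2 h1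
      refine ⟨p * a', by positivity, ?_, ?_, ?_⟩
      · calc p * a' ≤ p * (m / p) := by exact Nat.mul_le_mul_left p ha'le
          _ = m := Nat.mul_div_cancel' hdvd
      · have hpa : 0 < p * a' := by positivity
        rw [Nat.digits_def' hp hpa, List.sum_cons, Nat.mul_mod_right,
          Nat.mul_div_cancel_left _ hps, zero_add]
        exact ha'L
      · have hmeq : m = p * (m / p) := (Nat.mul_div_cancel' hdvd).symm
        have hsub : m - p * a' = p * (m / p - a') := by
          have h3 : p * (m / p - a') + p * a' = p * (m / p) := by
            rw [← Nat.mul_add]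
            congr 1
            omega
          omega
        rw [hsub]
        have hLm : (p.digits m).sum = (p.digits (m / p)).sum := by
          rw [Nat.digits_def' hp hm, List.sum_cons, h, zero_add]
        rcases Nat.eq_zero_or_pos (m / p - a') with h0 | h0
        · rw [h0, mul_zero]
          simpa [hLm, h0] using ha'
        · have hpt : 0 < p * (m / p - a') := by positivity
          rw [Nat.digits_def' hp hpt, List.sum_cons, Nat.mul_mod_right,
            Nat.mul_div_cancel_left _ hps, zero_add, hLm]
          exact ha'
    · -- m % p > 0, take a = 1
      have hL1 : (p.digits 1).sum = 1 := by
        have : p.digits 1 = [1] := Nat.digits_def' hp one_pos ▸ by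
          simp [Nat.mod_eq_of_lt hp, Nat.div_eq_of_lt hp]
        simp [this]
      refine ⟨1, one_pos, hm, hL1, ?_⟩
      rcases Nat.eq_zero_or_pos (m - 1) with h0 | h0
      · have hm1 : m = 1 := by omega
        subst hm1
        rw [h0]
        have : p.digits 1 = [1] := Nat.digits_def' hp one_pos ▸ by
          simp [Nat.mod_eq_of_lt hp, Nat.div_eq_of_lt hp]
        simp [this]
      · have hdm := Nat.div_add_mod m p
        have hq : (m - 1) / p = m / p := by
          conv_lhs => rw [show m - 1 = p * (m / p) + (m % p - 1) by omega]
          rw [Nat.mul_add_div hps]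
          have : (m % p - 1) / p = 0 := Nat.div_eq_of_lt (by have := Nat.mod_lt m hps; omega)
          omega
        have hmod : (m - 1) % p = m % p - 1 := by
          conv_lhs => rw [show m - 1 = p * (m / p) + (m % p - 1) by omega]
          rw [Nat.mul_add_mod]
          exact Nat.mod_eq_of_lt (by have := Nat.mod_lt m hps; omega)
        rw [Nat.digits_def' hp h0, Nat.digits_def' hp hm, List.sum_cons, List.sum_cons,
          hq, hmod]
        omega

private lemma legendre_add {p : ℕ} [Fact p.Prime] (n : ℕ) :
    (p - 1) * padicValNat p (n !) + (p.digits n).sum = n := by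
  have h := sub_one_mul_padicValNat_factorial (p := p) n
  have h2 := Nat.digit_sum_le p n
  omega

private lemma key_identity {p : ℕ} (hp : p.Prime) {r : ℕ} (k : Fin r → ℕ) :
    ∑ i, (p.digits (k i)).sum =
      (p - 1) * padicValNat p (Nat.multinomial Finset.univ k) + (p.digits (∑ i, k i)).sum := by
  haveI := Fact.mk hp
  set m := ∑ i, k i with hm
  -- valuation of factorial product
  have hprod : padicValNat p (∏ i, (k i)!) = ∑ i, padicValNat p ((k i)!) := by
    have := Nat.factorization_prod (S := Finset.univ) (g := fun i => (k i)!)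
      (fun i _ => Nat.factorial_ne_zero _)
    have h2 := congrArg (fun f => f p) this
    simpa [Nat.factorization_def _ hp, Finset.sum_apply'] using h2
  have hspec := Nat.multinomial_spec Finset.univ k
  have hval : padicValNat p (m !) =
      ∑ i, padicValNat p ((k i)!) + padicValNat p (Nat.multinomial Finset.univ k) := by
    rw [← hspec, padicValNat.mul (Finset.prod_ne_zero_iff.mpr fun i _ => Nat.factorial_ne_zero _)
      (Nat.multinomial_pos Finset.univ k).ne', hprod]
  have hA := legendre_add (p := p) m
  have hB : ∑ i, ((p - 1) * padicValNat p ((k i)!) + (p.digits (k i)).sum) = m := by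
    rw [hm]
    exact Finset.sum_congr rfl fun i _ => legendre_add (p := p) (k i)
  rw [Finset.sum_add_distrib, ← Finset.mul_sum] at hB
  rw [hval, mul_add] at hA
  generalize (p - 1) * ∑ i, padicValNat p ((k i)!) = x at hA hB
  generalize (p - 1) * padicValNat p (Nat.multinomial Finset.univ k) = y at hA ⊢
  omega

private lemma build {p : ℕ} (hp : 1 < p) : ∀ r, 1 ≤ r → ∀ m, r ≤ (p.digits m).sum →
    ∃ k : Fin r → ℕ, (∀ i, 0 < k i) ∧ (∑ i, k i) = m ∧
      ∑ i, (p.digits (k i)).sum = (p.digits m).sum := by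
  intro r hr
  induction r, hr using Nat.le_induction with
  | base =>
    intro m hL
    have hm : 0 < m := by
      by_contra h
      interval_cases m
      simp at hL
    exact ⟨fun _ => m, fun _ => hm, by simp, by simp⟩
  | succ r hr ih =>
    intro m hL
    have hm : 0 < m := by
      by_contra h
      interval_cases m
      simp at hL
    obtain ⟨a, ha0, hale, haL1, haL⟩ := split_digit hp m hm
    obtain ⟨k', hk'pos, hk'sum, hk'L⟩ := ih (m - a) (by omega)
    refine ⟨Fin.cons a k', ?_, ?_, ?_⟩
    · intro i
      refine Fin.cases ha0 (fun j => hk'pos j) i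
    · simp only [Fin.sum_univ_succ, Fin.cons_zero, Fin.cons_succ, hk'sum]; omega
    · simp only [Fin.sum_univ_succ, Fin.cons_zero, Fin.cons_succ, hk'L, haL1]; omega

/-- Lucas-type characterization: for a prime `p` and `m, r ∈ ℕ` with `r ≥ 1`, there exist
positive integers `k₁, …, k_r` summing to `m` whose multinomial coefficient is coprime to `p`
if and only if `r ≤ L_p(m)`, the sum of the base-`p` digits of `m`. -/
theorem stmt7 (p : ℕ) (hp : p.Prime) (m r : ℕ) (hr : 1 ≤ r) :
    (∃ k : Fin r → ℕ, (∀ i, 0 < k i) ∧ (∑ i, k i) = m ∧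
      Nat.Coprime (Nat.multinomial Finset.univ k) p)
      ↔ r ≤ (Nat.digits p m).sum := by
  haveI := Fact.mk hp
  have hp1 : 1 < p := hp.one_lt
  constructor
  · rintro ⟨k, hpos, hsum, hcop⟩
    have hkey := key_identity hp k
    rw [hsum] at hkey
    have hnd : ¬ p ∣ Nat.multinomial Finset.univ k :=
      (Nat.Prime.coprime_iff_not_dvd hp).mp hcop.symm
    have hval0 : padicValNat p (Nat.multinomial Finset.univ k) = 0 :=
      padicValNat.eq_zero_of_not_dvd hnd
    rw [hval0, mul_zero, zero_add] at hkey
    calc r = ∑ _i : Fin r, 1 := by simp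
      _ ≤ ∑ i, (p.digits (k i)).sum :=
        Finset.sum_le_sum fun i _ => digitsum_pos hp1 (k i) (hpos i)
      _ = (p.digits m).sum := hkey
  · intro hL
    obtain ⟨k, hpos, hsum, hLsum⟩ := build hp1 r hr m hL
    refine ⟨k, hpos, hsum, ?_⟩
    have hkey := key_identity hp k
    rw [hsum, hLsum] at hkey
    have hval0 : padicValNat p (Nat.multinomial Finset.univ k) = 0 := by
      have : (p - 1) * padicValNat p (Nat.multinomial Finset.univ k) = 0 := by omega
      have hp1' : p - 1 ≠ 0 := by omega
      exact (Nat.mul_eq_zero.mp this).resolve_left hp1'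
    have hnd : ¬ p ∣ Nat.multinomial Finset.univ k := by
      intro hdvd
      have := one_le_padicValNat_of_dvd (Nat.multinomial_pos Finset.univ k).ne' hdvd
      omega
    exact ((Nat.Prime.coprime_iff_not_dvd hp).mpr hnd).symm
end
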